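/- arXiv:1504.02532 — 3 statements merged into one kernel-verified Lean document; each statement's English description precedes it below -/
import Mathlib

section
/- Let A₁, …, A_M be n×n real Metzler matrices and let Π = [π_{ij}] ∈ ℝ^{M×M} be an infinitesimal generator matrix. Then the (Mn)×(Mn) matrix A = Πᵀ ⊗ I_n + ⨁_{i=1}^M A_i is Hurwitz stable if and only if there exist positive vectors v₁, …, v_M ∈ ℝⁿ such that for every i ∈ {1, …, M}, v_iᵀ A_i + Σ_{j=1}^M π_{ij} v_jᵀ < 0 entrywise. -/
open Matrix BigOperators Kronecker

/-- A square real matrix is Metzler if all its off-diagonal entries are nonnegative. -/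
def Metzler {n : Type*} [Fintype n] [DecidableEq n] (A : Matrix n n ℝ) : Prop :=
  ∀ i j, i ≠ j → 0 ≤ A i j

/-- A square real matrix is Hurwitz stable if the real parts of all its eigenvalues
(the complex spectrum of the matrix) are negative. -/
def HurwitzStable {n : Type*} [Fintype n] [DecidableEq n] (A : Matrix n n ℝ) : Prop :=
  ∀ μ ∈ spectrum ℂ (A.map Complex.ofReal), μ.re < 0

/-- The block-diagonal matrix `⨁_{i=1}^M A_i`, indexed compatibly with the Kronecker
product `Πᵀ ⊗ I_n` (block index first). -/
def dirSum {M n : ℕ} (A : Fin M → Matrix (Fin n) (Fin n) ℝ) :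
    Matrix (Fin M × Fin n) (Fin M × Fin n) ℝ :=
  Matrix.of fun p q => if p.1 = q.1 then A p.1 p.2 q.2 else 0


section Aux

variable {ι : Type*} [Fintype ι] [DecidableEq ι]

attribute [local instance] Matrix.linftyOpNormedAddCommGroup Matrix.linftyOpNormedRing
  Matrix.linftyOpNormedAlgebra Matrix.linftyOpNormedSpace

noncomputable local instance : CompleteSpace (Matrix ι ι ℝ) :=
  FiniteDimensional.complete ℝ _

noncomputable def entryCLM (i j : ι) : Matrix ι ι ℝ →L[ℝ] ℝ :=
  LinearMap.toContinuousLinearMap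
    { toFun := fun A : Matrix ι ι ℝ => A i j
      map_add' := fun _ _ => rfl
      map_smul' := fun _ _ => rfl }

lemma ring_inverse_mul_rev {M₀ : Type*} [MonoidWithZero M₀] {a b : M₀}
    (ha : IsUnit a) (hb : IsUnit b) :
    Ring.inverse (a * b) = Ring.inverse b * Ring.inverse a := by
  obtain ⟨u, rfl⟩ := ha; obtain ⟨w, rfl⟩ := hb
  rw [← Units.val_mul, Ring.inverse_unit, Ring.inverse_unit, Ring.inverse_unit,
    _root_.mul_inv_rev, Units.val_mul]

lemma geom_inv_mul_nonneg (X C : Matrix ι ι ℝ) (hX : ∀ i j, 0 ≤ X i j)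
    (hXn : ‖X‖ < 1) (hC : ∀ i j, 0 ≤ C i j) (i j : ι) :
    0 ≤ (Ring.inverse (1 - X) * C) i j := by
  have hpow : ∀ (k : ℕ) (a b : ι), 0 ≤ (X ^ k) a b := by
    intro k
    induction k with
    | zero => intro a b; simp only [pow_zero, Matrix.one_apply]; positivity
    | succ k ih =>
      intro a b
      rw [pow_succ, Matrix.mul_apply]
      exact Finset.sum_nonneg fun l _ => mul_nonneg (ih a l) (hX l b)
  have h1 : HasSum (fun k : ℕ => X ^ k) (Ring.inverse (1 - X)) :=
    hasSum_geom_series_inverse X hXn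
  have h2 : HasSum (fun k : ℕ => X ^ k * C) (Ring.inverse (1 - X) * C) := by
    have := h1.mapL (LinearMap.toContinuousLinearMap (LinearMap.mulRight ℝ C))
    simpa using this
  have h3 : HasSum (fun k : ℕ => (X ^ k * C) i j) ((Ring.inverse (1 - X) * C) i j) := by
    have := h2.mapL (entryCLM i j)
    exact this
  rw [← h3.tsum_eq]
  refine tsum_nonneg fun k => ?_
  rw [Matrix.mul_apply]
  exact Finset.sum_nonneg fun l _ => mul_nonneg (hpow k i l) (hC l j)

lemma metzler_hurwitz_iff [Nonempty ι] (B : Matrix ι ι ℝ) (hB : Metzler B) :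
    HurwitzStable B ↔
      ∃ v : ι → ℝ, (∀ k, 0 < v k) ∧ ∀ l, (∑ k, v k * B k l) < 0 := by
  classical
  set c : ℝ := 1 + ∑ k, |B k k| with hc_def
  have hc1 : 1 ≤ c := by
    have : (0:ℝ) ≤ ∑ k, |B k k| := Finset.sum_nonneg fun k _ => abs_nonneg _
    simp [hc_def]; linarith
  have hcd : ∀ k : ι, |B k k| ≤ c - 1 := by
    intro k
    have := Finset.single_le_sum (f := fun k => |B k k|) (fun k _ => abs_nonneg _)
      (Finset.mem_univ k)
    simp [hc_def]; linarith
  set N : Matrix ι ι ℝ := B + c • (1 : Matrix ι ι ℝ) with hN_def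
  have hN : ∀ i j, 0 ≤ N i j := by
    intro i j
    by_cases h : i = j
    · subst h
      have h1 := hcd i
      have h2 := neg_abs_le (B i i)
      simp [hN_def, Matrix.add_apply, Matrix.smul_apply, Matrix.one_apply]
      linarith
    · simpa [hN_def, Matrix.add_apply, Matrix.smul_apply, Matrix.one_apply, h] using hB i j h
  constructor
  · -- Hurwitz → exists v
    intro hH
    -- all nonnegative real shifts are units
    have hu : ∀ t : ℝ, 0 ≤ t → IsUnit (t • (1 : Matrix ι ι ℝ) - B) := by
      intro t ht
      by_contra hcon
      have hdet : (t • (1 : Matrix ι ι ℝ) - B).det = 0 := by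
        by_contra hd
        exact hcon ((Matrix.isUnit_iff_isUnit_det _).mpr (isUnit_iff_ne_zero.mpr hd))
      have hmap : ((t • (1 : Matrix ι ι ℝ) - B).map Complex.ofReal) =
          (t : ℂ) • (1 : Matrix ι ι ℂ) - B.map Complex.ofReal := by
        ext i j
        simp [Matrix.map_apply, Matrix.sub_apply, Matrix.smul_apply, Matrix.one_apply,
          apply_ite Complex.ofReal]
      have hdetC : ((t : ℂ) • (1 : Matrix ι ι ℂ) - B.map Complex.ofReal).det = 0 := by
        rw [← hmap]
        have h2 := (RingHom.map_det Complex.ofRealHom (t • (1 : Matrix ι ι ℝ) - B)).symm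
        rw [RingHom.mapMatrix_apply] at h2
        rw [show ((t • (1 : Matrix ι ι ℝ) - B).map Complex.ofReal) =
          ((t • (1 : Matrix ι ι ℝ) - B).map Complex.ofRealHom) from rfl, h2, hdet]
        simp
      have hmem : (t : ℂ) ∈ spectrum ℂ (B.map Complex.ofReal) := by
        rw [spectrum.mem_iff, Algebra.algebraMap_eq_smul_one]
        intro hun
        have := (Matrix.isUnit_iff_isUnit_det _).mp hun
        rw [hdetC] at this
        exact (not_isUnit_zero this)
      have := hH _ hmem
      simp only [Complex.ofReal_re] at this
      linarith
    set G : ℝ → Matrix ι ι ℝ := fun t => Ring.inverse (t • (1 : Matrix ι ι ℝ) - B) with hG_def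
    have hGr : ∀ t : ℝ, 0 ≤ t → (t • (1 : Matrix ι ι ℝ) - B) * G t = 1 :=
      fun t ht => Ring.mul_inverse_cancel _ (hu t ht)
    have hGl : ∀ t : ℝ, 0 ≤ t → G t * (t • (1 : Matrix ι ι ℝ) - B) = 1 :=
      fun t ht => Ring.inverse_mul_cancel _ (hu t ht)
    set T : ℝ := ‖N‖ with hT_def
    have hT0 : 0 ≤ T := norm_nonneg N
    -- base case: nonnegativity of G T
    have hGT : ∀ i j, 0 ≤ G T i j := by
      set s : ℝ := T + c with hs_def
      have hs : 0 < s := by linarith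
      have hXn : ‖s⁻¹ • N‖ < 1 := by
        rw [norm_smul, Real.norm_eq_abs, abs_of_pos (inv_pos.mpr hs)]
        have h1 : s⁻¹ * ‖N‖ < s⁻¹ * s :=
          mul_lt_mul_of_pos_left (by rw [← hT_def]; linarith) (inv_pos.mpr hs)
        rwa [inv_mul_cancel₀ hs.ne'] at h1
      have hfac : T • (1 : Matrix ι ι ℝ) - B = (s • (1 : Matrix ι ι ℝ)) * (1 - s⁻¹ • N) := by
        rw [mul_sub, mul_one, smul_mul_assoc, one_mul, smul_smul, mul_inv_cancel₀ hs.ne',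
          one_smul, hN_def, hs_def]
        module
      have hsu_unit : (Units.mk (s • (1 : Matrix ι ι ℝ)) (s⁻¹ • (1 : Matrix ι ι ℝ))
          (by rw [smul_mul_smul_comm, mul_inv_cancel₀ hs.ne', one_mul, one_smul])
          (by rw [smul_mul_smul_comm, inv_mul_cancel₀ hs.ne', one_mul, one_smul])) =
          (Units.mk _ _ _ _) := rfl
      set U : (Matrix ι ι ℝ)ˣ := Units.mk (s • (1 : Matrix ι ι ℝ)) (s⁻¹ • (1 : Matrix ι ι ℝ))
          (by rw [smul_mul_smul_comm, mul_inv_cancel₀ hs.ne', one_mul, one_smul])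
          (by rw [smul_mul_smul_comm, inv_mul_cancel₀ hs.ne', one_mul, one_smul]) with hU
      have hsu : IsUnit (s • (1 : Matrix ι ι ℝ)) := ⟨U, rfl⟩
      have h1X : IsUnit ((1 : Matrix ι ι ℝ) - s⁻¹ • N) := isUnit_one_sub_of_norm_lt_one hXn
      have hGT_eq : G T = Ring.inverse ((1 : Matrix ι ι ℝ) - s⁻¹ • N) * (s⁻¹ • 1) := by
        rw [hG_def]
        simp only
        rw [hfac, ring_inverse_mul_rev hsu h1X]
        congr 1
        rw [show (s • (1 : Matrix ι ι ℝ)) = (U : Matrix ι ι ℝ) from rfl, Ring.inverse_unit]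
        rfl
      intro i j
      rw [hGT_eq]
      refine geom_inv_mul_nonneg _ _ (fun i j => ?_) hXn (fun i j => ?_) i j
      · exact mul_nonneg (inv_pos.mpr hs).le (hN i j)
      · dsimp [Matrix.smul_apply, Matrix.one_apply]
        positivity
    -- uniform bound on the resolvent over [0, T]
    have hcont : ContinuousOn G (Set.Icc (0:ℝ) T) := by
      intro t ht
      have haff : Continuous fun t : ℝ => t • (1 : Matrix ι ι ℝ) - B :=
        (continuous_id.smul continuous_const).sub continuous_const
      have h1 : ContinuousAt Ring.inverse ((t • (1 : Matrix ι ι ℝ) - B)) := by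
        have := NormedRing.inverse_continuousAt (hu t ht.1).unit
        rwa [IsUnit.unit_spec] at this
      exact (ContinuousAt.comp (x := t) h1 haff.continuousAt).continuousWithinAt
    obtain ⟨K, hK⟩ := (isCompact_Icc (a := (0:ℝ)) (b := T)).exists_bound_of_continuousOn hcont
    have hKpos : 0 < K + 1 := by
      have := hK T ⟨hT0, le_rfl⟩
      have := norm_nonneg (G T)
      linarith
    set δ : ℝ := (2 * (K + 1))⁻¹ with hδ_def
    have hδ : 0 < δ := by positivity
    have hδK : δ * (K + 1) = 1 / 2 := by
      field_simp [hδ_def]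
      have h2 : δ * (2 * (K + 1)) = 1 := inv_mul_cancel₀ (mul_pos two_pos hKpos).ne'
      linear_combination h2
    -- grid induction
    have key : ∀ m : ℕ, ∀ i j, 0 ≤ G (max 0 (T - m * δ)) i j := by
      intro m
      induction m with
      | zero => simpa [max_eq_right hT0] using hGT
      | succ m ih =>
        set t₁ : ℝ := max 0 (T - m * δ) with ht₁_def
        set t : ℝ := max 0 (T - (m + 1 : ℕ) * δ) with ht_def
        have h0t : 0 ≤ t := le_max_left _ _
        have h0t₁ : 0 ≤ t₁ := le_max_left _ _
        have hmono : T - (m + 1 : ℕ) * δ ≤ T - m * δ := by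
          push_cast; nlinarith
        have htt : t ≤ t₁ := max_le_max le_rfl hmono
        have ht₁T : t₁ ≤ T := by
          apply max_le hT0
          nlinarith [hδ.le, Nat.cast_nonneg (α := ℝ) m]
        have hdiff : t₁ - t ≤ δ := by
          rcases le_or_gt (T - m * δ) 0 with h | h
          · have e1 : t₁ = 0 := max_eq_left h
            have e2 : t = 0 := max_eq_left (le_trans hmono h)
            rw [e1, e2]; simpa using hδ.le
          · have e1 : t₁ = T - m * δ := max_eq_right h.le
            have e2 : T - (m + 1 : ℕ) * δ ≤ t := le_max_right _ _
            push_cast at e1 e2 ⊢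
            nlinarith
        set X : Matrix ι ι ℝ := (t₁ - t) • G t₁ with hX_def
        have hXnn : ∀ i j, 0 ≤ X i j := fun i j =>
          mul_nonneg (sub_nonneg.mpr htt) (ih i j)
        have hXn : ‖X‖ < 1 := by
          rw [hX_def, norm_smul, Real.norm_eq_abs, abs_of_nonneg (sub_nonneg.mpr htt)]
          have h1 : ‖G t₁‖ ≤ K := hK t₁ ⟨h0t₁, ht₁T⟩
          have h2 : (t₁ - t) * ‖G t₁‖ ≤ δ * (K + 1) := by
            apply mul_le_mul hdiff (by linarith) (norm_nonneg _) hδ.le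
          rw [hδK] at h2
          linarith
        have hfac : t • (1 : Matrix ι ι ℝ) - B = (t₁ • (1 : Matrix ι ι ℝ) - B) * (1 - X) := by
          rw [mul_sub, mul_one, hX_def, mul_smul_comm, hGr t₁ h0t₁]
          module
        have h1X : IsUnit ((1 : Matrix ι ι ℝ) - X) := isUnit_one_sub_of_norm_lt_one hXn
        have hGt_eq : G t = Ring.inverse ((1 : Matrix ι ι ℝ) - X) * G t₁ := by
          rw [hG_def]
          simp only
          rw [hfac, ring_inverse_mul_rev (hu t₁ h0t₁) h1X]
        intro i j
        rw [hGt_eq]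
        exact geom_inv_mul_nonneg _ _ hXnn hXn ih i j
    -- conclude G 0 ≥ 0
    obtain ⟨m, hm⟩ := exists_nat_ge (T / δ)
    have hmδ : T ≤ m * δ := by
      rw [div_le_iff₀ hδ] at hm
      linarith
    have hG0 : ∀ i j, 0 ≤ G 0 i j := by
      have := key m
      rwa [max_eq_left (by linarith)] at this
    have hGB : G 0 * B = -1 := by
      have h := hGl 0 le_rfl
      rw [zero_smul, zero_sub, mul_neg] at h
      linear_combination (norm := abel) -h
    have hBG : ∀ l : ι, ∑ j, (-B) l j * G 0 j l = 1 := by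
      intro l
      have h := hGr 0 le_rfl
      rw [zero_smul, zero_sub] at h
      have h2 := congrFun (congrFun h l) l
      simpa [Matrix.mul_apply, Matrix.one_apply] using h2
    refine ⟨fun l => ∑ j, G 0 j l, ?_, ?_⟩
    · intro l
      rcases (Finset.sum_nonneg (fun j (_ : j ∈ Finset.univ) => hG0 j l)).lt_or_eq with h | h
      · exact h
      · exfalso
        have hzero : ∀ j, G 0 j l = 0 := by
          intro j
          have := (Finset.sum_eq_zero_iff_of_nonneg
            (fun j (_ : j ∈ Finset.univ) => hG0 j l)).mp h.symm
          exact this j (Finset.mem_univ j)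
        have := hBG l
        simp [hzero] at this
    · intro l
      have : ∑ k, (∑ j, G 0 j k) * B k l = ∑ j, (G 0 * B) j l := by
        simp_rw [Matrix.mul_apply, Finset.sum_mul]
        exact Finset.sum_comm
      rw [this, hGB]
      simp [Matrix.neg_apply, Matrix.one_apply]
  · -- exists v → Hurwitz
    rintro ⟨v, hv, hvB⟩ μ hμ
    rw [spectrum.mem_iff, Algebra.algebraMap_eq_smul_one] at hμ
    have hdet : (μ • (1 : Matrix ι ι ℂ) - B.map Complex.ofReal).det = 0 := by
      by_contra hd
      exact hμ ((Matrix.isUnit_iff_isUnit_det _).mpr (isUnit_iff_ne_zero.mpr hd))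
    obtain ⟨x, hx0, hxe⟩ := (Matrix.exists_mulVec_eq_zero_iff).mpr hdet
    have hBx : (B.map Complex.ofReal) *ᵥ x = μ • x := by
      rw [Matrix.sub_mulVec, Matrix.smul_mulVec, Matrix.one_mulVec] at hxe
      rw [← sub_eq_zero]
      rw [sub_eq_zero] at hxe ⊢
      exact hxe.symm
    set u : ι → ℝ := fun k => ‖x k‖ with hu_def
    obtain ⟨l₀, hl₀⟩ := Function.ne_iff.mp hx0
    have hul₀ : 0 < u l₀ := by
      simpa [hu_def] using (norm_pos_iff.mpr hl₀)
    have hNx : ∀ k, ‖μ + c‖ * u k ≤ ∑ l, N k l * u l := by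
      intro k
      have hrow : ∑ l, ((B k l : ℂ)) * x l = μ * x k := by
        have := congrFun hBx k
        simpa [Matrix.mulVec, dotProduct, Matrix.map_apply] using this
      have h1 : (μ + c) * x k = ∑ l, (N k l : ℂ) * x l := by
        have : ∀ l, (N k l : ℂ) = (B k l : ℂ) + (c : ℂ) * (if k = l then 1 else 0) := by
          intro l
          by_cases h : k = l
          · subst h
            rw [if_pos rfl, mul_one]
            have hd : N k k = B k k + c := by
              simp [hN_def, Matrix.add_apply, Matrix.smul_apply, Matrix.one_apply]
            rw [hd]; push_cast; ring
          · rw [if_neg h, mul_zero, add_zero]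
            have hd : N k l = B k l := by
              simp [hN_def, Matrix.add_apply, Matrix.smul_apply, Matrix.one_apply, h]
            rw [hd]
        simp_rw [this, add_mul, Finset.sum_add_distrib]
        rw [hrow]
        have : ∑ l, (c : ℂ) * (if k = l then 1 else 0) * x l = (c : ℂ) * x k := by
          simp [mul_ite, ite_mul, Finset.sum_ite_eq]
        rw [this]
      calc ‖μ + c‖ * u k = ‖(μ + c) * x k‖ := by
            rw [norm_mul]
          _ = ‖∑ l, (N k l : ℂ) * x l‖ := by rw [h1]
          _ ≤ ∑ l, ‖(N k l : ℂ) * x l‖ := norm_sum_le _ _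
          _ = ∑ l, N k l * u l := by
            refine Finset.sum_congr rfl fun l _ => ?_
            rw [norm_mul, Complex.norm_real, Real.norm_eq_abs, abs_of_nonneg (hN k l)]
    have hvN : ∀ l, ∑ k, v k * N k l < c * v l := by
      intro l
      have hsum : ∑ k, v k * N k l = (∑ k, v k * B k l) + c * v l := by
        have hterm : ∀ k, v k * N k l = v k * B k l + (if k = l then c * v k else 0) := by
          intro k
          by_cases h : k = l
          · subst h
            simp [hN_def, Matrix.add_apply, Matrix.smul_apply, Matrix.one_apply]
            ring
          · simp [hN_def, Matrix.add_apply, Matrix.smul_apply, Matrix.one_apply, h]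
        simp_rw [hterm, Finset.sum_add_distrib, Finset.sum_ite_eq']
        simp
      rw [hsum]
      have := hvB l
      linarith
    set S : ℝ := ∑ k, v k * u k with hS_def
    have hS : 0 < S := by
      refine Finset.sum_pos' (fun k _ => mul_nonneg (hv k).le (norm_nonneg _)) ?_
      exact ⟨l₀, Finset.mem_univ l₀, mul_pos (hv l₀) hul₀⟩
    have hchain : ‖μ + c‖ * S < c * S := by
      calc ‖μ + c‖ * S = ∑ k, v k * (‖μ + c‖ * u k) := by
            rw [hS_def, Finset.mul_sum]; refine Finset.sum_congr rfl fun k _ => by ring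
        _ ≤ ∑ k, v k * (∑ l, N k l * u l) :=
            Finset.sum_le_sum fun k _ => mul_le_mul_of_nonneg_left (hNx k) (hv k).le
        _ = ∑ l, (∑ k, v k * N k l) * u l := by
            simp_rw [Finset.mul_sum, Finset.sum_mul]
            rw [Finset.sum_comm]
            exact Finset.sum_congr rfl fun l _ => Finset.sum_congr rfl fun k _ => by ring
        _ < ∑ l, (c * v l) * u l := by
            refine Finset.sum_lt_sum (fun l _ =>
              mul_le_mul_of_nonneg_right (hvN l).le (norm_nonneg _)) ?_
            exact ⟨l₀, Finset.mem_univ l₀, mul_lt_mul_of_pos_right (hvN l₀) hul₀⟩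
        _ = c * S := by
            rw [hS_def, Finset.mul_sum]; exact Finset.sum_congr rfl fun l _ => by ring
    have habs : ‖μ + c‖ < c := lt_of_mul_lt_mul_right hchain hS.le
    have hre : μ.re + c ≤ ‖μ + c‖ := by
      have := Complex.re_le_norm (μ + (c : ℂ))
      simpa using this
    linarith

end Aux

lemma sum_entry {n M : ℕ} (A : Fin M → Matrix (Fin n) (Fin n) ℝ)
    (Pgen : Matrix (Fin M) (Fin M) ℝ) (V : Fin M × Fin n → ℝ) (i : Fin M) (l : Fin n) :
    ∑ p : Fin M × Fin n,
        V p * (Pgen.transpose ⊗ₖ (1 : Matrix (Fin n) (Fin n) ℝ) + dirSum A) p (i, l) =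
      (∑ k, V (i, k) * A i k l) + ∑ j, Pgen i j * V (j, l) := by
  rw [Fintype.sum_prod_type]
  have hterm : ∀ (j : Fin M) (k : Fin n),
      V (j, k) * (Pgen.transpose ⊗ₖ (1 : Matrix (Fin n) (Fin n) ℝ) + dirSum A) (j, k) (i, l) =
        (if k = l then Pgen i j * V (j, k) else 0) +
          (if j = i then V (j, k) * A j k l else 0) := by
    intro j k
    simp only [Matrix.add_apply, Matrix.kroneckerMap_apply, dirSum, Matrix.of_apply,
      Matrix.transpose_apply, Matrix.one_apply, mul_add]
    by_cases h1 : k = l <;> by_cases h2 : j = i <;> simp [h1, h2] <;> ring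
  have e1 : ∑ j, ∑ k, (if k = l then Pgen i j * V (j, k) else 0) = ∑ j, Pgen i j * V (j, l) := by
    refine Finset.sum_congr rfl fun j _ => ?_
    simp [Finset.sum_ite_eq']
  have e2 : ∑ j, ∑ k, (if j = i then V (j, k) * A j k l else 0) = ∑ k, V (i, k) * A i k l := by
    rw [Finset.sum_comm]
    refine Finset.sum_congr rfl fun k _ => ?_
    simp [Finset.sum_ite_eq']
  simp_rw [hterm, Finset.sum_add_distrib]
  rw [e1, e2, add_comm]

/-- For Metzler matrices `A_1, …, A_M` and an infinitesimal generator `Π`,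
the matrix `A = Πᵀ ⊗ I_n + ⨁_{i=1}^M A_i` is Hurwitz stable iff there exist positive
vectors `v_1, …, v_M` with `v_iᵀ A_i + Σ_j π_{ij} v_jᵀ < 0` entrywise for every `i`. -/
theorem mjls_mean_stability (n M : ℕ) (A : Fin M → Matrix (Fin n) (Fin n) ℝ)
    (hA : ∀ i, Metzler (A i))
    (Pgen : Matrix (Fin M) (Fin M) ℝ)
    (hgen₁ : ∀ i j, i ≠ j → 0 ≤ Pgen i j)
    (hgen₂ : ∀ i, ∑ j, Pgen i j = 0) :
    HurwitzStable (Pgen.transpose ⊗ₖ (1 : Matrix (Fin n) (Fin n) ℝ) + dirSum A) ↔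
      ∃ v : Fin M → Fin n → ℝ, (∀ i k, 0 < v i k) ∧
        ∀ i l, (∑ k, v i k * A i k l) + (∑ j, Pgen i j * v j l) < 0 := by
  rcases isEmpty_or_nonempty (Fin M × Fin n) with he | hne
  · constructor
    · intro _
      refine ⟨fun _ _ => 1, fun _ _ => one_pos, fun i l => ?_⟩
      rcases isEmpty_prod.mp he with h | h
      exacts [h.elim i, h.elim l]
    · intro _ μ hμ
      exfalso
      rw [spectrum.mem_iff] at hμ
      exact hμ (isUnit_of_subsingleton _)
  · have hMz : Metzler (Pgen.transpose ⊗ₖ (1 : Matrix (Fin n) (Fin n) ℝ) + dirSum A) := by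
      rintro ⟨i, k⟩ ⟨j, l⟩ hpq
      simp only [Matrix.add_apply, Matrix.kroneckerMap_apply, dirSum, Matrix.of_apply,
        Matrix.transpose_apply, Matrix.one_apply]
      by_cases hij : i = j
      · subst hij
        have hkl : k ≠ l := fun h => hpq (by rw [h])
        simpa [hkl] using hA i k l hkl
      · have h0 : (0:ℝ) ≤ Pgen j i := hgen₁ j i (Ne.symm hij)
        simp only [hij, if_false, add_zero]
        positivity
    rw [metzler_hurwitz_iff _ hMz]
    constructor
    · rintro ⟨V, hV, hVB⟩
      refine ⟨fun i k => V (i, k), fun i k => hV _, fun i l => ?_⟩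
      have := hVB (i, l)
      rwa [sum_entry] at this
    · rintro ⟨v, hv, hvB⟩
      refine ⟨fun p => v p.1 p.2, fun p => hv _ _, ?_⟩
      rintro ⟨i, l⟩
      rw [show (fun p : Fin M × Fin n => v p.1 p.2) = fun p => v p.1 p.2 from rfl]
      rw [sum_entry (V := fun p => v p.1 p.2)]
      exact hvB i l
end

section
/- Let A₁, …, A_M be n×n real Metzler matrices, let Π = [π_{ij}] ∈ ℝ^{M×M} be an infinitesimal generator matrix, and let λ > 0. Then the matrix Πᵀ ⊗ I_n + ⨁_{i=1}^M A_i + λ I_{Mn} is Hurwitz stable if and only if there exist positive vectors v₁, …, v_M ∈ ℝⁿ such that for every i ∈ {1, …, M}, v_iᵀ A_i + Σ_{j=1}^M π_{ij} v_jᵀ + λ v_iᵀ < 0 entrywise. -/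
open Matrix BigOperators Kronecker
open scoped ENNReal NNReal

set_option linter.unusedSectionVars false
set_option linter.unusedVariables false

attribute [local instance] Matrix.linftyOpNormedRing Matrix.linftyOpNormedAlgebra

section Aux
variable {ι : Type*} [Fintype ι] [DecidableEq ι]

lemma nnnorm_map_ofReal (A : Matrix ι ι ℝ) : ‖A.map Complex.ofReal‖₊ = ‖A‖₊ := by
  simp [Matrix.linfty_opNNNorm_def, Matrix.map_apply]

lemma exists_eigvec {B : Matrix ι ι ℝ} {μ : ℂ} (h : μ ∈ spectrum ℂ (B.map Complex.ofReal)) :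
    ∃ x : ι → ℂ, x ≠ 0 ∧ ∀ i, ∑ j, (B i j : ℂ) * x j = μ * x i := by
  rw [← AlgEquiv.spectrum_eq (Matrix.toLinAlgEquiv' (R := ℂ) (n := ι))] at h
  have h' := Module.End.hasEigenvalue_iff_mem_spectrum.mpr h
  obtain ⟨x, hx⟩ := h'.exists_hasEigenvector
  refine ⟨x, hx.right, fun i => ?_⟩
  have := hx.apply_eq_smul
  have h2 : (B.map Complex.ofReal).mulVec x = μ • x := by
    rw [Matrix.toLinAlgEquiv'_apply] at this; simpa [Matrix.mulVecLin] using this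
  have := congrFun h2 i
  simpa [Matrix.mulVec, dotProduct, Matrix.map_apply] using this

end Aux

section Aux2
variable {ι : Type*} [Fintype ι] [DecidableEq ι]

lemma hurwitz_of_posvec {B : Matrix ι ι ℝ}
    (hB : ∀ i j, i ≠ j → 0 ≤ B i j) {w : ι → ℝ}
    (hw : ∀ i, 0 < w i) (hs : ∀ j, ∑ i, w i * B i j < 0) :
    ∀ μ ∈ spectrum ℂ (B.map Complex.ofReal), μ.re < 0 := by
  intro μ hμ
  obtain ⟨x, hx0, hx⟩ := exists_eigvec hμ
  set y : ι → ℝ := fun i => ‖x i‖ with hy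
  have hynn : ∀ i, 0 ≤ y i := fun i => norm_nonneg _
  have key : ∀ i, μ.re * y i ≤ ∑ j, B i j * y j := by
    intro i
    have h1 : (μ - (B i i : ℂ)) * x i = ∑ j ∈ Finset.univ.erase i, (B i j : ℂ) * x j := by
      have := hx i
      rw [← Finset.add_sum_erase _ _ (Finset.mem_univ i)] at this
      rw [sub_mul]
      linear_combination -this
    have h2 : ‖(μ - (B i i : ℂ)) * x i‖ ≤ ∑ j ∈ Finset.univ.erase i, B i j * y j := by
      rw [h1]
      refine (norm_sum_le _ _).trans (Finset.sum_le_sum fun j hj => ?_)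
      rw [norm_mul, Complex.norm_real, Real.norm_eq_abs,
        abs_of_nonneg (hB i j (Ne.symm (Finset.ne_of_mem_erase hj)))]
    have h3 : (μ.re - B i i) * y i ≤ ‖(μ - (B i i : ℂ)) * x i‖ := by
      rw [norm_mul]
      have : μ.re - B i i ≤ ‖μ - (B i i : ℂ)‖ := by
        calc μ.re - B i i = (μ - (B i i : ℂ)).re := by simp
        _ ≤ ‖μ - (B i i : ℂ)‖ := Complex.re_le_norm _
      exact mul_le_mul_of_nonneg_right this (hynn i) |>.trans
        (mul_le_mul_of_nonneg_left (le_refl _) (norm_nonneg _))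
    have := h3.trans h2
    have h4 : μ.re * y i ≤ B i i * y i + ∑ j ∈ Finset.univ.erase i, B i j * y j := by nlinarith
    rwa [Finset.add_sum_erase _ (fun j => B i j * y j) (Finset.mem_univ i)] at h4
  -- sum against w
  obtain ⟨j0, hj0⟩ : ∃ j, x j ≠ 0 := Function.ne_iff.mp hx0
  have hyj0 : 0 < y j0 := norm_pos_iff.mpr hj0
  have hW : 0 < ∑ i, w i * y i := by
    have : 0 < w j0 * y j0 := mul_pos (hw j0) hyj0
    have h5 : ∀ i ∈ Finset.univ, 0 ≤ w i * y i :=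
      fun i _ => mul_nonneg (hw i).le (hynn i)
    calc (0:ℝ) < w j0 * y j0 := this
    _ ≤ ∑ i, w i * y i := Finset.single_le_sum h5 (Finset.mem_univ j0)
  have hS : ∑ j, (∑ i, w i * B i j) * y j < 0 := by
    have hle : ∀ j ∈ Finset.univ, (∑ i, w i * B i j) * y j ≤ 0 :=
      fun j _ => mul_nonpos_of_nonpos_of_nonneg (hs j).le (hynn j)
    have hlt : (∑ i, w i * B i j0) * y j0 < 0 := mul_neg_of_neg_of_pos (hs j0) hyj0
    calc ∑ j, (∑ i, w i * B i j) * y j ≤ (∑ i, w i * B i j0) * y j0 := by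
          rw [← Finset.add_sum_erase _ _ (Finset.mem_univ j0)]
          have : ∑ j ∈ Finset.univ.erase j0, (∑ i, w i * B i j) * y j ≤ 0 :=
            Finset.sum_nonpos fun j hj => hle j (Finset.mem_univ j)
          linarith
    _ < 0 := hlt
  have hchain : μ.re * ∑ i, w i * y i ≤ ∑ j, (∑ i, w i * B i j) * y j := by
    calc μ.re * ∑ i, w i * y i = ∑ i, w i * (μ.re * y i) := by
          rw [Finset.mul_sum]; apply Finset.sum_congr rfl; intros; ring
    _ ≤ ∑ i, w i * (∑ j, B i j * y j) :=
        Finset.sum_le_sum fun i _ => mul_le_mul_of_nonneg_left (key i) (hw i).le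
    _ = ∑ j, (∑ i, w i * B i j) * y j := by
        simp_rw [Finset.mul_sum, Finset.sum_mul]
        rw [Finset.sum_comm]
        apply Finset.sum_congr rfl; intros; apply Finset.sum_congr rfl; intros; ring
  nlinarith
end Aux2

section Aux3
variable {ι : Type*} [Fintype ι] [DecidableEq ι]

lemma matmul_nonneg {P Q : Matrix ι ι ℝ} (hP : ∀ i j, 0 ≤ P i j) (hQ : ∀ i j, 0 ≤ Q i j) :
    ∀ i j, 0 ≤ (P * Q) i j := by
  intro i j
  rw [Matrix.mul_apply]
  exact Finset.sum_nonneg fun k _ => mul_nonneg (hP i k) (hQ k j)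

lemma pow_nonneg_entries {X : Matrix ι ι ℝ} (hX : ∀ i j, 0 ≤ X i j) (k : ℕ) :
    ∀ i j, 0 ≤ (X ^ k) i j := by
  induction k with
  | zero => intro i j; rw [pow_zero]; by_cases h : i = j <;> simp [Matrix.one_apply, h]
  | succ k ih => rw [pow_succ]; exact matmul_nonneg ih hX

lemma posvec_of_hurwitz {B : Matrix ι ι ℝ} (hB : ∀ i j, i ≠ j → 0 ≤ B i j)
    (hH : ∀ μ ∈ spectrum ℂ (B.map Complex.ofReal), μ.re < 0) :
    ∃ w : ι → ℝ, (∀ i, 0 < w i) ∧ ∀ j, ∑ i, w i * B i j < 0 := by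
  classical
  cases isEmpty_or_nonempty ι with
  | inl h => exact ⟨fun _ => 1, fun i => (h.false i).elim, fun j => (h.false j).elim⟩
  | inr hne =>
  set Bc := B.map Complex.ofReal with hBcdef
  have hfin := Matrix.finite_spectrum Bc
  set Sf : Finset ℂ := hfin.toFinset with hSf
  set c : ℝ := 1 + (∑ i, |B i i|) + ∑ μ ∈ Sf, ‖μ‖ ^ 2 / (2 * (-μ.re)) with hc
  have hterm : ∀ μ ∈ Sf, 0 ≤ ‖μ‖ ^ 2 / (2 * (-μ.re)) := by
    intro μ hμ
    have := hH μ (hfin.mem_toFinset.mp hμ)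
    have h2 : 0 ≤ 2 * (-μ.re) := by linarith
    exact div_nonneg (sq_nonneg _) h2
  have habs : (0:ℝ) ≤ ∑ i, |B i i| := Finset.sum_nonneg fun i _ => abs_nonneg _
  have hsum2 : (0:ℝ) ≤ ∑ μ ∈ Sf, ‖μ‖ ^ 2 / (2 * (-μ.re)) := Finset.sum_nonneg hterm
  have hc0 : 0 < c := by rw [hc]; linarith
  have hcne : c ≠ 0 := ne_of_gt hc0
  have hcB : ∀ i, -B i i ≤ c := by
    intro i
    have h1 : |B i i| ≤ ∑ j, |B j j| :=
      Finset.single_le_sum (fun j _ => abs_nonneg (B j j)) (Finset.mem_univ i)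
    have h2 := neg_le_abs (B i i)
    rw [hc]; linarith
  have hcμ : ∀ μ ∈ spectrum ℂ Bc, ‖μ + (c:ℂ)‖ < c := by
    intro μ hμ
    have hre := hH μ hμ
    have hmem : μ ∈ Sf := hfin.mem_toFinset.mpr hμ
    have hle : ‖μ‖ ^ 2 / (2 * (-μ.re)) ≤ ∑ ν ∈ Sf, ‖ν‖ ^ 2 / (2 * (-ν.re)) :=
      Finset.single_le_sum hterm hmem
    have hltc : ‖μ‖ ^ 2 / (2 * (-μ.re)) < c := by rw [hc]; linarith
    have hpos : 0 < 2 * (-μ.re) := by linarith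
    have h2 : ‖μ‖ ^ 2 < 2 * (-μ.re) * c := by
      rwa [div_lt_iff₀ hpos, mul_comm c _] at hltc
    have hsq1 : ‖μ + (c:ℂ)‖ ^ 2 = (μ.re + c) ^ 2 + μ.im ^ 2 := by
      rw [Complex.sq_norm, Complex.normSq_apply]
      simp [Complex.add_re, Complex.add_im]
      ring
    have hsq2 : ‖μ‖ ^ 2 = μ.re ^ 2 + μ.im ^ 2 := by
      rw [Complex.sq_norm, Complex.normSq_apply]; ring
    nlinarith [norm_nonneg (μ + (c:ℂ)), hc0]
  -- the shifted matrix
  set N : Matrix ι ι ℝ := B + c • 1 with hN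
  set X : Matrix ι ι ℝ := c⁻¹ • N with hX
  have hXnn : ∀ i j, 0 ≤ X i j := by
    intro i j
    have hval : X i j = c⁻¹ * (B i j + c * (if i = j then 1 else 0)) := by
      simp only [hX, hN, Matrix.smul_apply, Matrix.add_apply, Matrix.one_apply, smul_eq_mul]
      all_goals split_ifs <;> ring
    rw [hval]
    refine mul_nonneg (inv_nonneg.mpr hc0.le) ?_
    by_cases h : i = j
    · subst h
      rw [if_pos rfl, mul_one]
      have := hcB i; linarith
    · rw [if_neg h, mul_zero, add_zero]
      exact hB i j h
  set Xc : Matrix ι ι ℂ := X.map Complex.ofReal with hXcdef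
  have hcneC : (c:ℂ) ≠ 0 := by exact_mod_cast hcne
  have hXcval : Xc = (Units.mk0 (c:ℂ) hcneC)⁻¹ • (algebraMap ℂ (Matrix ι ι ℂ) (c:ℂ) + Bc) := by
    ext i j
    simp only [hXcdef, hX, hN, hBcdef, Matrix.map_apply, Matrix.smul_apply, Matrix.add_apply,
      Matrix.one_apply, Algebra.algebraMap_eq_smul_one, Units.smul_def, Units.val_inv_eq_inv_val,
      Units.val_mk0, smul_eq_mul]
    split_ifs <;> push_cast <;> ring
  have hradlt : ∀ ν ∈ spectrum ℂ Xc, ‖ν‖₊ < 1 := by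
    intro ν hν
    rw [hXcval, spectrum.unit_smul_eq_smul, ← spectrum.singleton_add_eq] at hν
    rw [Set.mem_smul_set] at hν
    obtain ⟨z, hz, rfl⟩ := hν
    rw [Set.mem_add] at hz
    obtain ⟨a, ha, b, hb, rfl⟩ := hz
    rw [Set.mem_singleton_iff] at ha; subst ha
    have hnorm : ‖(Units.mk0 (c:ℂ) hcneC)⁻¹ • ((c:ℂ) + b)‖ < 1 := by
      rw [Units.smul_def, norm_smul, Units.val_inv_eq_inv_val, Units.val_mk0, norm_inv,
        Complex.norm_real, Real.norm_eq_abs, abs_of_pos hc0]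
      have hb' := hcμ b hb
      rw [add_comm] at hb'
      calc c⁻¹ * ‖(c:ℂ) + b‖ < c⁻¹ * c :=
            mul_lt_mul_of_pos_left hb' (inv_pos.mpr hc0)
      _ = 1 := inv_mul_cancel₀ hcne
    exact_mod_cast hnorm
  haveI : CompleteSpace (Matrix ι ι ℂ) := FiniteDimensional.complete ℂ _
  have hspecne : (spectrum ℂ Xc).Nonempty := spectrum.nonempty Xc
  have hrad : spectralRadius ℂ Xc < 1 := by
    have := spectrum.spectralRadius_lt_of_forall_lt_of_nonempty hspecne hradlt
    simpa using this
  have htend := spectrum.pow_nnnorm_pow_one_div_tendsto_nhds_spectralRadius Xc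
  have hev := htend.eventually_lt_const hrad
  obtain ⟨m, hm, hm1⟩ := (hev.and (Filter.eventually_ge_atTop 1)).exists
  have hXmc : ‖Xc ^ m‖₊ < 1 := by
    by_contra hcon
    push_neg at hcon
    have h1 : (1:ℝ≥0∞) ≤ (‖Xc ^ m‖₊ : ℝ≥0∞) ^ (1/(m:ℝ)) := by
      calc (1:ℝ≥0∞) = 1 ^ (1/(m:ℝ)) := (ENNReal.one_rpow _).symm
      _ ≤ _ := ENNReal.rpow_le_rpow (by exact_mod_cast hcon) (by positivity)
    exact absurd hm (not_lt.mpr h1)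
  have hmap : (X ^ m).map Complex.ofReal = Xc ^ m := by
    have := map_pow (Complex.ofRealHom.mapMatrix : Matrix ι ι ℝ →+* Matrix ι ι ℂ) X m
    simpa [RingHom.mapMatrix_apply, hXcdef, Complex.ofRealHom] using this
  have hXm : ‖X ^ m‖ < 1 := by
    have h2 : ‖X ^ m‖₊ < 1 := by rw [← nnnorm_map_ofReal, hmap]; exact hXmc
    exact_mod_cast h2
  haveI : CompleteSpace (Matrix ι ι ℝ) := FiniteDimensional.complete ℝ _
  have hsum : Summable (fun k => (X ^ m) ^ k) := summable_geometric_of_norm_lt_one hXm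
  set Sm : Matrix ι ι ℝ := ∑' k, (X ^ m) ^ k with hSm
  have hS1 : (1 - X ^ m) * Sm = 1 := mul_neg_geom_series _ hXm
  have hSnn : ∀ i j, 0 ≤ Sm i j := by
    intro i j
    let L : Matrix ι ι ℝ →ₗ[ℝ] ℝ :=
      { toFun := fun M2 => M2 i j
        map_add' := fun a b => rfl
        map_smul' := fun r a => rfl }
    have hcont : Continuous L := LinearMap.continuous_of_finiteDimensional L
    have htd := (hcont.tendsto Sm).comp hsum.hasSum.tendsto_sum_nat
    refine ge_of_tendsto htd (Filter.Eventually.of_forall fun nn => ?_)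
    show 0 ≤ L (∑ k ∈ Finset.range nn, (X ^ m) ^ k)
    have hLsum : L (∑ k ∈ Finset.range nn, (X ^ m) ^ k)
        = ∑ k ∈ Finset.range nn, ((X ^ m) ^ k) i j := map_sum L _ _
    rw [hLsum]
    exact Finset.sum_nonneg fun k _ => pow_nonneg_entries (pow_nonneg_entries hXnn m) k i j
  set Pm : Matrix ι ι ℝ := ∑ r ∈ Finset.range m, X ^ r with hPm
  have hPnn : ∀ i j, 0 ≤ Pm i j := by
    intro i j
    rw [hPm, Matrix.sum_apply]
    exact Finset.sum_nonneg fun r _ => pow_nonneg_entries hXnn r i j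
  set T : Matrix ι ι ℝ := Pm * Sm with hT
  have hT1 : (1 - X) * T = 1 := by
    rw [hT, ← mul_assoc, mul_neg_geom_sum, hS1]
  have hTnn : ∀ i j, 0 ≤ T i j := matmul_nonneg hPnn hSnn
  have h1X : (1:Matrix ι ι ℝ) - X = (-(c⁻¹)) • B := by
    ext i j
    simp only [hX, hN, Matrix.sub_apply, Matrix.one_apply, Matrix.smul_apply, Matrix.add_apply,
      smul_eq_mul, neg_mul]
    split_ifs with h
    · field_simp; ring
    · ring
  set G : Matrix ι ι ℝ := c⁻¹ • T with hGdef
  have hGnn : ∀ i j, 0 ≤ G i j := by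
    intro i j
    have : G i j = c⁻¹ * T i j := rfl
    rw [this]
    exact mul_nonneg (inv_nonneg.mpr hc0.le) (hTnn i j)
  have hBG : (-B) * G = 1 := by
    have h := hT1
    rw [h1X, smul_mul_assoc] at h
    calc (-B) * G = (-B) * (c⁻¹ • T) := rfl
    _ = c⁻¹ • ((-B) * T) := mul_smul_comm _ _ _
    _ = (-(c⁻¹)) • (B * T) := by rw [neg_mul, smul_neg, neg_smul]
    _ = 1 := h
  have hGB : G * (-B) = 1 := mul_eq_one_comm.mp hBG
  have hGBval : G * B = -1 := by
    have h := hGB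
    rw [Matrix.mul_neg] at h
    exact neg_eq_iff_eq_neg.mp h
  refine ⟨fun j => ∑ i, G i j, ?_, ?_⟩
  · intro j
    by_contra hle
    push_neg at hle
    have hnn : ∀ i ∈ Finset.univ, 0 ≤ G i j := fun i _ => hGnn i j
    have hsum0 : ∑ i, G i j = 0 := le_antisymm hle (Finset.sum_nonneg hnn)
    have hz := (Finset.sum_eq_zero_iff_of_nonneg hnn).mp hsum0
    have h1 : ((-B) * G) j j = 1 := by rw [hBG, Matrix.one_apply_eq]
    rw [Matrix.mul_apply] at h1
    have hzero : ∑ k, (-B) j k * G k j = 0 :=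
      Finset.sum_eq_zero fun k _ => by rw [hz k (Finset.mem_univ k), mul_zero]
    rw [hzero] at h1; exact one_ne_zero h1.symm
  · intro l
    have hswap : ∑ i, (∑ k, G k i) * B i l = ∑ k, (G * B) k l := by
      simp_rw [Finset.sum_mul]
      rw [Finset.sum_comm]
      exact Finset.sum_congr rfl fun k _ => (Matrix.mul_apply).symm
    rw [hswap, hGBval]
    have hfin2 : ∑ k, (-1 : Matrix ι ι ℝ) k l = -1 := by
      simp [Matrix.neg_apply, Matrix.one_apply]
    rw [hfin2]; norm_num


end Aux3


/-- For Metzler matrices `A_1, …, A_M`, an infinitesimal generator `Π`, and `λ > 0`,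
the matrix `Πᵀ ⊗ I_n + ⨁_{i=1}^M A_i + λ I_{Mn}` is Hurwitz stable iff there exist positive
vectors `v_1, …, v_M` with `v_iᵀ A_i + Σ_j π_{ij} v_jᵀ + λ v_iᵀ < 0` entrywise for every `i`. -/
theorem mjls_decay_rate (n M : ℕ) (A : Fin M → Matrix (Fin n) (Fin n) ℝ)
    (hA : ∀ i, Metzler (A i))
    (Pgen : Matrix (Fin M) (Fin M) ℝ)
    (hgen₁ : ∀ i j, i ≠ j → 0 ≤ Pgen i j)
    (hgen₂ : ∀ i, ∑ j, Pgen i j = 0)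
    (lam : ℝ) (hlam : 0 < lam) :
    HurwitzStable (Pgen.transpose ⊗ₖ (1 : Matrix (Fin n) (Fin n) ℝ) + dirSum A +
        lam • (1 : Matrix (Fin M × Fin n) (Fin M × Fin n) ℝ)) ↔
      ∃ v : Fin M → Fin n → ℝ, (∀ i k, 0 < v i k) ∧
        ∀ i l, (∑ k, v i k * A i k l) + (∑ j, Pgen i j * v j l) + lam * v i l < 0 := by
  classical
  set Bf : Matrix (Fin M × Fin n) (Fin M × Fin n) ℝ :=
    Pgen.transpose ⊗ₖ (1 : Matrix (Fin n) (Fin n) ℝ) + dirSum A +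
      lam • (1 : Matrix (Fin M × Fin n) (Fin M × Fin n) ℝ) with hBf
  have hentry : ∀ (j : Fin M) (k : Fin n) (i : Fin M) (l : Fin n),
      Bf (j,k) (i,l) = Pgen i j * (if k = l then 1 else 0)
        + (if j = i then A j k l else 0)
        + lam * (if j = i ∧ k = l then 1 else 0) := by
    intro j k i l
    simp only [hBf, Matrix.add_apply, Matrix.smul_apply, Matrix.kroneckerMap_apply,
      Matrix.transpose_apply, dirSum, Matrix.of_apply, Matrix.one_apply, smul_eq_mul,
      Prod.mk.injEq]
  have hMetz : ∀ p q : Fin M × Fin n, p ≠ q → 0 ≤ Bf p q := by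
    rintro ⟨j,k⟩ ⟨i,l⟩ hne
    rw [hentry]
    by_cases hji : j = i
    · subst hji
      have hkl : k ≠ l := fun h => hne (by rw [h])
      have h0 := hA j k l hkl
      simpa [hkl] using h0
    · rw [if_neg hji, if_neg (show ¬(j = i ∧ k = l) from fun h => hji h.1)]
      have h1 : 0 ≤ Pgen i j * (if k = l then 1 else 0) := by
        have := hgen₁ i j (fun h => hji h.symm)
        split_ifs <;> simp <;> linarith
      simp only [mul_zero, add_zero]
      linarith
  have key : ∀ (w : Fin M × Fin n → ℝ) (i : Fin M) (l : Fin n),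
      (∑ p : Fin M × Fin n, w p * Bf p (i,l)) =
        (∑ k, w (i,k) * A i k l) + (∑ j, Pgen i j * w (j,l)) + lam * w (i,l) := by
    intro w i l
    rw [Fintype.sum_prod_type]
    have hexp : ∀ (j : Fin M) (k : Fin n), w (j,k) * Bf (j,k) (i,l) =
        (if k = l then w (j,k) * Pgen i j else 0)
        + (if j = i then w (j,k) * A j k l else 0)
        + (if j = i ∧ k = l then lam * w (j,k) else 0) := by
      intro j k
      rw [hentry]
      by_cases h1 : j = i <;> by_cases h2 : k = l <;> simp [h1, h2] <;> ring
    simp_rw [hexp, Finset.sum_add_distrib]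
    have p1 : (∑ j : Fin M, ∑ k : Fin n, if k = l then w (j,k) * Pgen i j else 0)
        = ∑ j, Pgen i j * w (j,l) := by
      apply Finset.sum_congr rfl
      intro j _
      rw [Finset.sum_ite_eq' Finset.univ l (fun k => w (j,k) * Pgen i j)]
      simp [mul_comm]
    have p2 : (∑ j : Fin M, ∑ k : Fin n, if j = i then w (j,k) * A j k l else 0)
        = ∑ k, w (i,k) * A i k l := by
      have : ∀ j : Fin M, (∑ k : Fin n, if j = i then w (j,k) * A j k l else 0)
          = if j = i then (∑ k : Fin n, w (j,k) * A j k l) else 0 := by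
        intro j; split_ifs <;> simp
      simp_rw [this]
      rw [Finset.sum_ite_eq' Finset.univ i (fun j => ∑ k : Fin n, w (j,k) * A j k l)]
      simp
    have p3 : (∑ j : Fin M, ∑ k : Fin n, if j = i ∧ k = l then lam * w (j,k) else 0)
        = lam * w (i,l) := by
      simp_rw [ite_and]
      have : ∀ j : Fin M, (∑ k : Fin n, if j = i then (if k = l then lam * w (j,k) else 0) else 0)
          = if j = i then lam * w (j,l) else 0 := by
        intro j
        by_cases h : j = i
        · subst h
          simp
        · simp [h]
      simp_rw [this]
      simp
    rw [p1, p2, p3]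
    ring
  constructor
  · intro hH
    obtain ⟨w, hw, hs⟩ := posvec_of_hurwitz hMetz hH
    refine ⟨fun i k => w (i,k), fun i k => hw (i,k), ?_⟩
    intro i l
    have h2 := hs (i,l)
    rw [key] at h2
    exact h2
  · rintro ⟨v, hv, hs⟩
    have hs' : ∀ q : Fin M × Fin n, ∑ p : Fin M × Fin n, v p.1 p.2 * Bf p q < 0 := by
      rintro ⟨i,l⟩
      rw [key (fun p => v p.1 p.2) i l]
      exact hs i l
    exact hurwitz_of_posvec hMetz (fun p => hv p.1 p.2) hs'
end

section
/- Let A be an n×n real Metzler matrix, let B ∈ ℝ^{n×s}, C ∈ ℝ^{r×n}, D ∈ ℝ^{r×s} be entrywise nonnegative, and let γ > 0. Then the following are equivalent: (i) A is Hurwitz stable and 𝟙_rᵀ(D − C A⁻¹ B) − γ 𝟙_sᵀ < 0 entrywise; (ii) there exists a positive vector v ∈ ℝⁿ satisfying vᵀA + 𝟙_rᵀC < 0 and vᵀB + 𝟙_rᵀD < γ 𝟙_sᵀ entrywise. -/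
open Matrix BigOperators

variable {n : ℕ}


lemma mem_spectrum_iff_det {M : Matrix (Fin n) (Fin n) ℂ} {μ : ℂ} :
    μ ∈ spectrum ℂ M ↔ (μ • (1 : Matrix (Fin n) (Fin n) ℂ) - M).det = 0 := by
  rw [spectrum.mem_iff, Matrix.isUnit_iff_isUnit_det, isUnit_iff_ne_zero, not_not,
    Matrix.algebraMap_eq_diagonal]
  congr! 3
  ext i j
  simp [Matrix.diagonal, Matrix.one_apply, Matrix.smul_apply]

lemma mem_spectrum_of_det_real {A : Matrix (Fin n) (Fin n) ℝ} {μ : ℝ}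
    (h : (μ • (1 : Matrix (Fin n) (Fin n) ℝ) - A).det = 0) :
    (μ : ℂ) ∈ spectrum ℂ (A.map Complex.ofReal) := by
  rw [mem_spectrum_iff_det]
  have heq : (μ : ℂ) • (1 : Matrix (Fin n) (Fin n) ℂ) - A.map Complex.ofReal
      = (μ • (1 : Matrix (Fin n) (Fin n) ℝ) - A).map Complex.ofReal := by
    ext i j
    simp [Matrix.one_apply, apply_ite Complex.ofReal]
  have h2 := RingHom.map_det Complex.ofRealHom (μ • (1 : Matrix (Fin n) (Fin n) ℝ) - A)
  simp only [RingHom.mapMatrix_apply] at h2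
  rw [heq, show (Complex.ofReal : ℝ → ℂ) = ⇑Complex.ofRealHom from rfl, ← h2, h, map_zero]

/-- eigenvector existence -/
lemma exists_eigvec_s3 {M : Matrix (Fin n) (Fin n) ℂ} {μ : ℂ} (h : μ ∈ spectrum ℂ M) :
    ∃ x : Fin n → ℂ, x ≠ 0 ∧ M.mulVec x = μ • x := by
  rw [mem_spectrum_iff_det] at h
  obtain ⟨x, hx, hMx⟩ := (Matrix.exists_mulVec_eq_zero_iff).2 h
  refine ⟨x, hx, ?_⟩
  have h0 : μ • x - M.mulVec x = 0 := by
    simpa [Matrix.sub_mulVec, Matrix.smul_mulVec, Matrix.one_mulVec] using hMx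
  exact (sub_eq_zero.mp h0).symm


lemma hurwitz_of_pos_vec {A : Matrix (Fin n) (Fin n) ℝ} (hA : Metzler A)
    {v : Fin n → ℝ} (hv : ∀ i, 0 < v i) (h : ∀ j, ∑ i, v i * A i j < 0) :
    HurwitzStable A := by
  intro μ hμ
  -- pass to transpose
  have hdet : (μ • (1 : Matrix (Fin n) (Fin n) ℂ) - A.map Complex.ofReal).det = 0 :=
    mem_spectrum_iff_det.mp hμ
  have hdetT : (μ • (1 : Matrix (Fin n) (Fin n) ℂ) - (Aᵀ).map Complex.ofReal).det = 0 := by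
    rw [← Matrix.det_transpose]
    convert hdet using 2
    ext i j
    simp [Matrix.transpose_apply, Matrix.one_apply, eq_comm]
  obtain ⟨x, hx, hEig⟩ := exists_eigvec_s3 (M := (Aᵀ).map Complex.ofReal) (μ := μ)
    (mem_spectrum_iff_det.mpr hdetT)
  have hne : Nonempty (Fin n) := by
    by_contra hemp
    exact hx (funext fun i => absurd (Nonempty.intro i) hemp)
  -- argmax of |x i| / v i
  obtain ⟨j0, -, hj0⟩ := Finset.exists_max_image Finset.univ
    (fun i => ‖x i‖ / v i) Finset.univ_nonempty
  set t : ℝ := ‖x j0‖ / v j0 with ht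
  have hbound : ∀ i, ‖x i‖ ≤ t * v i := by
    intro i
    have := hj0 i (Finset.mem_univ i)
    rwa [div_le_iff₀ (hv i)] at this
  have htpos : 0 < t := by
    obtain ⟨k, hk⟩ := Function.ne_iff.mp hx
    have : 0 < ‖x k‖ / v k := div_pos (by simpa using hk) (hv k)
    exact lt_of_lt_of_le this (hj0 k (Finset.mem_univ k))
  have hxj0 : ‖x j0‖ = t * v j0 := (div_mul_cancel₀ _ (hv j0).ne').symm
  have hxj0pos : 0 < ‖x j0‖ := by
    rw [hxj0]; exact mul_pos htpos (hv j0)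
  -- eigen equation at j0
  have heq : (μ - (A j0 j0 : ℂ)) * x j0 = ∑ i ∈ Finset.univ.erase j0, (A i j0 : ℂ) * x i := by
    have := congrFun hEig j0
    simp only [Matrix.mulVec, dotProduct, Pi.smul_apply, smul_eq_mul] at this
    have hsplit : ∑ i, ((Aᵀ).map Complex.ofReal) j0 i * x i
        = (A j0 j0 : ℂ) * x j0 + ∑ i ∈ Finset.univ.erase j0, (A i j0 : ℂ) * x i := by
      rw [← Finset.add_sum_erase _ _ (Finset.mem_univ j0)]
      simp [Matrix.transpose_apply]
    rw [hsplit] at this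
    linear_combination -this
  -- Gershgorin estimate
  have habs : ‖μ - (A j0 j0 : ℂ)‖ * ‖x j0‖
      ≤ ∑ i ∈ Finset.univ.erase j0, A i j0 * (t * v i) := by
    rw [← norm_mul, heq]
    refine le_trans (norm_sum_le _ _) (Finset.sum_le_sum fun i hi => ?_)
    have hAij : 0 ≤ A i j0 := hA i j0 (Finset.ne_of_mem_erase hi)
    rw [norm_mul, Complex.norm_real, Real.norm_eq_abs, abs_of_nonneg hAij]
    exact mul_le_mul_of_nonneg_left (hbound i) hAij
  have hsum : ∑ i ∈ Finset.univ.erase j0, A i j0 * (t * v i)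
      < -(A j0 j0) * (t * v j0) := by
    have hsplit : v j0 * A j0 j0 + ∑ i ∈ Finset.univ.erase j0, v i * A i j0
        = ∑ i, v i * A i j0 :=
      Finset.add_sum_erase Finset.univ (fun i => v i * A i j0) (Finset.mem_univ j0)
    have h1 : ∑ i ∈ Finset.univ.erase j0, v i * A i j0 < -(v j0 * A j0 j0) := by
      have := h j0; linarith
    calc ∑ i ∈ Finset.univ.erase j0, A i j0 * (t * v i)
        = t * ∑ i ∈ Finset.univ.erase j0, v i * A i j0 := by
          rw [Finset.mul_sum]; exact Finset.sum_congr rfl fun i _ => by ring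
      _ < t * -(v j0 * A j0 j0) := by exact mul_lt_mul_of_pos_left h1 htpos
      _ = -(A j0 j0) * (t * v j0) := by ring
  have hfin : ‖μ - (A j0 j0 : ℂ)‖ < -(A j0 j0) := by
    rw [hxj0] at habs
    exact lt_of_mul_lt_mul_right (lt_of_le_of_lt habs hsum) (mul_pos htpos (hv j0)).le
  have hre : μ.re - A j0 j0 ≤ ‖μ - (A j0 j0 : ℂ)‖ := by
    have := Complex.abs_re_le_norm (μ - (A j0 j0 : ℂ))
    rw [Complex.sub_re, Complex.ofReal_re] at this
    exact le_trans (le_abs_self _) this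
  linarith


lemma inv_nonpos_of_metzler {A : Matrix (Fin n) (Fin n) ℝ} (hA : Metzler A)
    (hdet : IsUnit A.det) {w : Fin n → ℝ} (hw : ∀ i, 0 < w i)
    (hAw : ∀ i, A.mulVec w i < 0) : ∀ i j, A⁻¹ i j ≤ 0 := by
  cases isEmpty_or_nonempty (Fin n) with
  | inl hemp => exact fun i => absurd (Nonempty.intro i) (not_nonempty_iff.mpr hemp)
  | inr hne =>
  set c : ℝ := 1 + ∑ k, |A k k| with hc
  have hcpos : 0 < c := by positivity
  set N : Matrix (Fin n) (Fin n) ℝ := A + c • (1 : Matrix (Fin n) (Fin n) ℝ) with hNdef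
  have hNapply : ∀ i j, N i j = A i j + c * (if i = j then 1 else 0) := by
    intro i j
    simp [hNdef, Matrix.add_apply, Matrix.smul_apply, Matrix.one_apply]
  have hN : ∀ i j, 0 ≤ N i j := by
    intro i j
    rw [hNapply]
    by_cases hij : i = j
    · subst hij
      rw [if_pos rfl, mul_one]
      have h1 : |A i i| ≤ ∑ k, |A k k| :=
        Finset.single_le_sum (fun k _ => abs_nonneg (A k k)) (Finset.mem_univ i)
      have h2 : c = 1 + ∑ k, |A k k| := hc
      linarith [neg_abs_le (A i i), h1]
    · simp only [if_neg hij, mul_zero, add_zero]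
      exact hA i j hij
  have hNw : ∀ i, N.mulVec w i = A.mulVec w i + c * w i := by
    intro i
    simp [hNdef, Matrix.add_mulVec, Matrix.smul_mulVec, Matrix.one_mulVec]
  have hNwpos : ∀ i, N.mulVec w i < c * w i := fun i => by
    rw [hNw i]; linarith [hAw i]
  have hNwnn : ∀ i, 0 ≤ N.mulVec w i := by
    intro i
    rw [Matrix.mulVec, dotProduct]
    exact Finset.sum_nonneg fun j _ => mul_nonneg (hN i j) (hw j).le
  -- θ
  set θ : ℝ := Finset.univ.sup' Finset.univ_nonempty (fun i => N.mulVec w i / (c * w i)) with hθ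
  have hθ1 : θ < 1 := by
    rw [hθ, Finset.sup'_lt_iff]
    intro i _
    rw [div_lt_one (mul_pos hcpos (hw i))]
    exact hNwpos i
  have hθ0 : 0 ≤ θ := by
    obtain ⟨i⟩ := hne
    exact le_trans (div_nonneg (hNwnn i) (mul_pos hcpos (hw i)).le)
      (Finset.le_sup' (fun i => N.mulVec w i / (c * w i)) (Finset.mem_univ i))
  have hθle : ∀ i, N.mulVec w i ≤ θ * (c * w i) := by
    intro i
    have := Finset.le_sup' (fun i => N.mulVec w i / (c * w i)) (Finset.mem_univ i)
    rwa [div_le_iff₀ (mul_pos hcpos (hw i))] at this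
  -- powers of N are nonneg
  have hNpow : ∀ m i j, 0 ≤ (N ^ m) i j := by
    intro m
    induction m with
    | zero => intro i j; simp [Matrix.one_apply]; positivity
    | succ m ih =>
      intro i j
      rw [pow_succ, Matrix.mul_apply]
      exact Finset.sum_nonneg fun k _ => mul_nonneg (ih i k) (hN k j)
  -- key decay bound
  have hkey : ∀ m i, (N ^ m).mulVec w i ≤ θ ^ m * c ^ m * w i := by
    intro m
    induction m with
    | zero => intro i; simp [Matrix.one_mulVec]
    | succ m ih =>
      intro i
      rw [pow_succ', ← Matrix.mulVec_mulVec]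
      calc N.mulVec ((N ^ m).mulVec w) i
          = ∑ j, N i j * (N ^ m).mulVec w j := rfl
        _ ≤ ∑ j, N i j * (θ ^ m * c ^ m * w j) :=
            Finset.sum_le_sum fun j _ => mul_le_mul_of_nonneg_left (ih j) (hN i j)
        _ = θ ^ m * c ^ m * N.mulVec w i := by
            rw [Matrix.mulVec, dotProduct, Finset.mul_sum]
            exact Finset.sum_congr rfl fun j _ => by ring
        _ ≤ θ ^ m * c ^ m * (θ * (c * w i)) := by
            exact mul_le_mul_of_nonneg_left (hθle i)
              (mul_nonneg (pow_nonneg hθ0 m) (pow_nonneg hcpos.le m))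
        _ = θ ^ (m + 1) * c ^ (m + 1) * w i := by ring
  have hentry : ∀ m i j, (N ^ m) i j ≤ θ ^ m * c ^ m * w i / w j := by
    intro m i j
    rw [le_div_iff₀ (hw j)]
    calc (N ^ m) i j * w j
        ≤ ∑ k, (N ^ m) i k * w k :=
          Finset.single_le_sum (fun k _ => mul_nonneg (hNpow m i k) (hw k).le)
            (Finset.mem_univ j)
      _ = (N ^ m).mulVec w i := rfl
      _ ≤ θ ^ m * c ^ m * w i := hkey m i
  -- telescoping identity
  have hid : ∀ m, A * (∑ k ∈ Finset.range m, (c ^ (k + 1))⁻¹ • N ^ k)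
      = (c ^ m)⁻¹ • N ^ m - 1 := by
    intro m
    induction m with
    | zero => simp
    | succ m ih =>
      rw [Finset.sum_range_succ, Matrix.mul_add, ih, Matrix.mul_smul]
      have hAN : A * N ^ m = N ^ (m + 1) - c • N ^ m := by
        have : A = N - c • (1 : Matrix (Fin n) (Fin n) ℝ) := by rw [hNdef]; abel
        rw [this, Matrix.sub_mul, Matrix.smul_mul, Matrix.one_mul, ← pow_succ']
      rw [hAN, smul_sub, smul_smul]
      have hcc : (c ^ (m + 1))⁻¹ * c = (c ^ m)⁻¹ := by
        rw [pow_succ]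
        field_simp
      rw [hcc]
      abel
  -- conclude
  intro i j
  set K : ℝ := (∑ k, |A⁻¹ i k| * w k) / w j with hK
  have hKnn : 0 ≤ K :=
    div_nonneg (Finset.sum_nonneg fun k _ => mul_nonneg (abs_nonneg _) (hw k).le) (hw j).le
  have hmain : ∀ m : ℕ, A⁻¹ i j ≤ θ ^ m * K := by
    intro m
    have hSm := congrArg (fun M => A⁻¹ * M) (hid m)
    simp only [← Matrix.mul_assoc, Matrix.nonsing_inv_mul A hdet, Matrix.one_mul] at hSm
    -- hSm : ∑ ... = A⁻¹ * ((c^m)⁻¹ • N^m - 1)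
    have hSm' : (∑ k ∈ Finset.range m, (c ^ (k + 1))⁻¹ • N ^ k) i j
        = (c ^ m)⁻¹ * (A⁻¹ * N ^ m) i j - A⁻¹ i j := by
      rw [hSm, Matrix.mul_sub, Matrix.mul_smul, Matrix.mul_one, Matrix.sub_apply,
        Matrix.smul_apply, smul_eq_mul]
    have hSnn : 0 ≤ (∑ k ∈ Finset.range m, (c ^ (k + 1))⁻¹ • N ^ k) i j := by
      rw [Matrix.sum_apply]
      refine Finset.sum_nonneg fun k _ => ?_
      rw [Matrix.smul_apply, smul_eq_mul]
      exact mul_nonneg (inv_nonneg.mpr (pow_nonneg hcpos.le _)) (hNpow k i j)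
    have hbound : (c ^ m)⁻¹ * (A⁻¹ * N ^ m) i j ≤ θ ^ m * K := by
      have h1 : (A⁻¹ * N ^ m) i j ≤ ∑ k, |A⁻¹ i k| * (θ ^ m * c ^ m * w k / w j) := by
        rw [Matrix.mul_apply]
        refine Finset.sum_le_sum fun k _ => ?_
        calc A⁻¹ i k * (N ^ m) k j ≤ |A⁻¹ i k * (N ^ m) k j| := le_abs_self _
          _ = |A⁻¹ i k| * (N ^ m) k j := by
              rw [abs_mul, abs_of_nonneg (hNpow m k j)]
          _ ≤ |A⁻¹ i k| * (θ ^ m * c ^ m * w k / w j) :=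
              mul_le_mul_of_nonneg_left (hentry m k j) (abs_nonneg _)
      have h2 : ∑ k, |A⁻¹ i k| * (θ ^ m * c ^ m * w k / w j)
          = c ^ m * (θ ^ m * K) := by
        rw [hK, Finset.sum_div, Finset.mul_sum, Finset.mul_sum]
        exact Finset.sum_congr rfl fun k _ => by
          field_simp
      calc (c ^ m)⁻¹ * (A⁻¹ * N ^ m) i j
          ≤ (c ^ m)⁻¹ * (c ^ m * (θ ^ m * K)) := by
            rw [← h2]
            exact mul_le_mul_of_nonneg_left h1 (inv_nonneg.mpr (pow_nonneg hcpos.le m))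
        _ = θ ^ m * K := by
            field_simp
    linarith [hSnn, hSm'.symm.le, hSm'.le]
  have hlim : Filter.Tendsto (fun m : ℕ => θ ^ m * K) Filter.atTop (nhds 0) := by
    have := (tendsto_pow_atTop_nhds_zero_of_lt_one hθ0 hθ1).mul_const K
    simpa using this
  exact ge_of_tendsto' hlim hmain


lemma perron_positive [Nonempty (Fin n)] {P : Matrix (Fin n) (Fin n) ℝ}
    (hP : ∀ i j, 0 < P i j) :
    ∃ ρ : ℝ, 0 < ρ ∧ ∃ x : Fin n → ℝ, (∀ i, 0 < x i) ∧ P.mulVec x = ρ • x := by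
  set S : Set (ℝ × (Fin n → ℝ)) :=
    {p | 0 ≤ p.1 ∧ p.2 ∈ stdSimplex ℝ (Fin n) ∧ ∀ i, p.1 * p.2 i ≤ P.mulVec p.2 i} with hS
  -- mulVec entries nonneg on simplex
  have hmv : ∀ x : Fin n → ℝ, (∀ i, 0 ≤ x i) → ∀ i, 0 ≤ P.mulVec x i := by
    intro x hx i
    rw [Matrix.mulVec, dotProduct]
    exact Finset.sum_nonneg fun j _ => mul_nonneg (hP i j).le (hx j)
  -- uniform point
  set x0 : Fin n → ℝ := fun _ => (Fintype.card (Fin n) : ℝ)⁻¹ with hx0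
  have hcard : (0:ℝ) < (Fintype.card (Fin n) : ℝ) := by
    have := Fintype.card_pos (α := Fin n)
    exact_mod_cast this
  have hx0mem : x0 ∈ stdSimplex ℝ (Fin n) := by
    constructor
    · intro i; exact inv_nonneg.mpr hcard.le
    · simp only [hx0, Finset.sum_const, Finset.card_univ, nsmul_eq_mul]
      rw [mul_inv_cancel₀ hcard.ne']
  have hS0 : ((0:ℝ), x0) ∈ S := by
    refine ⟨le_refl 0, hx0mem, fun i => ?_⟩
    simpa using hmv x0 (fun i => inv_nonneg.mpr hcard.le) i
  -- upper bound
  set B : ℝ := ∑ i, ∑ j, P i j with hB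
  have hSB : ∀ p ∈ S, p.1 ≤ B := by
    rintro ⟨t, x⟩ ⟨ht, hxmem, hineq⟩
    have h1 : t = ∑ i, t * x i := by
      rw [← Finset.mul_sum, hxmem.2, mul_one]
    have h2 : ∑ i, t * x i ≤ ∑ i, P.mulVec x i := Finset.sum_le_sum fun i _ => hineq i
    have h3 : ∑ i, P.mulVec x i ≤ B := by
      rw [hB]
      refine Finset.sum_le_sum fun i _ => ?_
      rw [Matrix.mulVec, dotProduct]
      refine Finset.sum_le_sum fun j _ => ?_
      have hxj1 : x j ≤ 1 := by
        rw [← hxmem.2]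
        exact Finset.single_le_sum (fun k _ => hxmem.1 k) (Finset.mem_univ j)
      calc P i j * x j ≤ P i j * 1 := mul_le_mul_of_nonneg_left hxj1 (hP i j).le
        _ = P i j := mul_one _
    calc t = ∑ i, t * x i := h1
      _ ≤ B := le_trans h2 h3
  -- closedness
  have hclosed : IsClosed S := by
    have c1 : IsClosed {p : ℝ × (Fin n → ℝ) | 0 ≤ p.1} :=
      isClosed_le continuous_const continuous_fst
    have c2 : IsClosed {p : ℝ × (Fin n → ℝ) | p.2 ∈ stdSimplex ℝ (Fin n)} :=
      (isClosed_stdSimplex ℝ (Fin n)).preimage continuous_snd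
    have c3 : IsClosed {p : ℝ × (Fin n → ℝ) | ∀ i, p.1 * p.2 i ≤ P.mulVec p.2 i} := by
      have : {p : ℝ × (Fin n → ℝ) | ∀ i, p.1 * p.2 i ≤ P.mulVec p.2 i}
          = ⋂ i, {p : ℝ × (Fin n → ℝ) | p.1 * p.2 i ≤ P.mulVec p.2 i} := by
        ext p; simp
      rw [this]
      refine isClosed_iInter fun i => isClosed_le ?_ ?_
      · exact continuous_fst.mul ((continuous_apply i).comp continuous_snd)
      · have : (fun p : ℝ × (Fin n → ℝ) => P.mulVec p.2 i)
            = fun p => ∑ j, P i j * p.2 j := by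
          funext p; rw [Matrix.mulVec, dotProduct]
        rw [this]
        exact continuous_finset_sum _ fun j _ =>
          continuous_const.mul ((continuous_apply j).comp continuous_snd)
    have : S = ({p : ℝ × (Fin n → ℝ) | 0 ≤ p.1} ∩
        {p | p.2 ∈ stdSimplex ℝ (Fin n)}) ∩
        {p | ∀ i, p.1 * p.2 i ≤ P.mulVec p.2 i} := by
      ext p
      simp [hS, and_assoc]
    rw [this]
    exact ((c1.inter c2).inter c3)
  -- compactness
  have hcompact : IsCompact S := by
    refine IsCompact.of_isClosed_subset ((isCompact_Icc (a := (0:ℝ)) (b := B)).prod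
      (isCompact_stdSimplex ℝ (Fin n))) hclosed ?_
    rintro ⟨t, x⟩ hp
    exact ⟨⟨hp.1, hSB _ hp⟩, hp.2.1⟩
  -- maximize
  obtain ⟨⟨ρ, x⟩, hmem, hmax⟩ := hcompact.exists_isMaxOn ⟨_, hS0⟩
    (continuous_fst.continuousOn)
  obtain ⟨hρ0, hxmem, hineq⟩ := hmem
  -- x has a positive entry
  have hxpos : ∃ j, 0 < x j := by
    by_contra hno
    push_neg at hno
    have : ∑ i, x i = 0 := le_antisymm (Finset.sum_nonpos fun i _ => hno i)
      (Finset.sum_nonneg fun i _ => hxmem.1 i)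
    rw [hxmem.2] at this
    norm_num at this
  have hz : ∀ i, 0 < P.mulVec x i := by
    intro i
    obtain ⟨j0, hj0⟩ := hxpos
    rw [Matrix.mulVec, dotProduct]
    refine Finset.sum_pos' (fun j _ => mul_nonneg (hP i j).le (hxmem.1 j)) ?_
    exact ⟨j0, Finset.mem_univ j0, mul_pos (hP i j0) hj0⟩
  -- the eigen equation
  have heig : P.mulVec x = ρ • x := by
    by_contra hne
    set d : Fin n → ℝ := fun i => P.mulVec x i - ρ * x i with hd
    have hdnn : ∀ i, 0 ≤ d i := fun i => sub_nonneg.mpr (hineq i)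
    have hdex : ∃ i0, 0 < d i0 := by
      by_contra hno
      push_neg at hno
      apply hne
      funext i
      have : d i = 0 := le_antisymm (hno i) (hdnn i)
      have := sub_eq_zero.mp this
      simpa [Pi.smul_apply, smul_eq_mul] using this
    obtain ⟨i0, hi0⟩ := hdex
    set z : Fin n → ℝ := P.mulVec x with hzdef
    have hPd : ∀ i, 0 < P.mulVec d i := by
      intro i
      rw [Matrix.mulVec, dotProduct]
      refine Finset.sum_pos' (fun j _ => mul_nonneg (hP i j).le (hdnn j)) ?_
      exact ⟨i0, Finset.mem_univ i0, mul_pos (hP i i0) hi0⟩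
    have hPz : ∀ i, ρ * z i < P.mulVec z i := by
      intro i
      have hxd : z = ρ • x + d := by
        funext j; simp [hzdef, hd]
      have : P.mulVec z = ρ • P.mulVec x + P.mulVec d := by
        rw [hxd, Matrix.mulVec_add, Matrix.mulVec_smul]
      rw [this]
      have := hPd i
      simp only [Pi.add_apply, Pi.smul_apply, smul_eq_mul]
      rw [hzdef]
      linarith
    -- get ε
    set ε : ℝ := Finset.univ.inf' Finset.univ_nonempty
      (fun i => (P.mulVec z i - ρ * z i) / z i) with hε
    have hεpos : 0 < ε := by
      rw [hε, Finset.lt_inf'_iff]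
      intro i _
      exact div_pos (by linarith [hPz i]) (hz i)
    have hεle : ∀ i, (ρ + ε) * z i ≤ P.mulVec z i := by
      intro i
      have h1 : ε ≤ (P.mulVec z i - ρ * z i) / z i :=
        Finset.inf'_le _ (Finset.mem_univ i)
      rw [le_div_iff₀ (hz i)] at h1
      nlinarith [hz i]
    set σ : ℝ := ∑ i, z i with hσ
    have hσpos : 0 < σ := Finset.sum_pos (fun i _ => hz i) Finset.univ_nonempty
    have hmem' : (ρ + ε, σ⁻¹ • z) ∈ S := by
      refine ⟨by linarith, ⟨fun i => ?_, ?_⟩, fun i => ?_⟩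
      · exact mul_nonneg (inv_nonneg.mpr hσpos.le) (hz i).le
      · simp only [Pi.smul_apply, smul_eq_mul, ← Finset.mul_sum]
        rw [← hσ, inv_mul_cancel₀ hσpos.ne']
      · rw [Matrix.mulVec_smul]
        simp only [Pi.smul_apply, smul_eq_mul]
        have := hεle i
        nlinarith [inv_nonneg.mpr hσpos.le]
    have := hmax hmem'
    simp only [Set.mem_setOf_eq] at this
    have h2 : ρ + ε ≤ ρ := this
    linarith
  -- positivity of ρ
  have ht0 : ∀ i, 0 < P.mulVec x0 i := by
    intro i
    rw [Matrix.mulVec, dotProduct]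
    refine Finset.sum_pos (fun j _ => mul_pos (hP i j) (inv_pos.mpr hcard)) Finset.univ_nonempty
  set t0 : ℝ := Finset.univ.inf' Finset.univ_nonempty (fun i => P.mulVec x0 i) with ht0d
  have ht0pos : 0 < t0 := by
    rw [ht0d, Finset.lt_inf'_iff]
    exact fun i _ => ht0 i
  have hmemt0 : (t0, x0) ∈ S := by
    refine ⟨ht0pos.le, hx0mem, fun i => ?_⟩
    have h1 : t0 ≤ P.mulVec x0 i := Finset.inf'_le _ (Finset.mem_univ i)
    have h2 : x0 i ≤ 1 := by
      rw [hx0]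
      simp only
      rw [inv_le_one_iff₀]
      right
      exact_mod_cast Fintype.card_pos
    nlinarith [ht0pos]
  have hρt0 : t0 ≤ ρ := hmax hmemt0
  have hρpos : 0 < ρ := lt_of_lt_of_le ht0pos hρt0
  refine ⟨ρ, hρpos, x, fun i => ?_, heig⟩
  have : x i = ρ⁻¹ * P.mulVec x i := by
    have := congrFun heig i
    simp only [Pi.smul_apply, smul_eq_mul] at this
    field_simp [hρpos.ne']
    linarith [this]
  rw [this]
  exact mul_pos (inv_pos.mpr hρpos) (hz i)

lemma exists_pos_vec_of_hurwitz {A : Matrix (Fin n) (Fin n) ℝ} (hA : Metzler A)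
    (hH : HurwitzStable A) :
    ∃ w : Fin n → ℝ, (∀ i, 0 < w i) ∧ ∀ i, A.mulVec w i < 0 := by
  cases isEmpty_or_nonempty (Fin n) with
  | inl hemp => exact ⟨fun _ => 1, fun i => isEmptyElim i, fun i => isEmptyElim i⟩
  | inr hne =>
  set c : ℝ := 1 + ∑ k, |A k k| with hc
  have hcpos : 0 < c := by positivity
  set N : Matrix (Fin n) (Fin n) ℝ := A + c • (1 : Matrix (Fin n) (Fin n) ℝ) with hNdef
  have hN : ∀ i j, 0 ≤ N i j := by
    intro i j
    have : N i j = A i j + c * (if i = j then 1 else 0) := by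
      simp [hNdef, Matrix.add_apply, Matrix.smul_apply, Matrix.one_apply]
    rw [this]
    by_cases hij : i = j
    · subst hij
      rw [if_pos rfl, mul_one]
      have h1 : |A i i| ≤ ∑ k, |A k k| :=
        Finset.single_le_sum (fun k _ => abs_nonneg (A k k)) (Finset.mem_univ i)
      have h2 : c = 1 + ∑ k, |A k k| := hc
      linarith [neg_abs_le (A i i)]
    · rw [if_neg hij, mul_zero, add_zero]
      exact hA i j hij
  -- perturbed positive matrices
  set J : Matrix (Fin n) (Fin n) ℝ := Matrix.of (fun _ _ => (1:ℝ)) with hJ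
  set P : ℕ → Matrix (Fin n) (Fin n) ℝ := fun k => N + ((k:ℝ) + 1)⁻¹ • J with hP
  have hPpos : ∀ k i j, 0 < P k i j := by
    intro k i j
    have hk : (0:ℝ) < ((k:ℝ) + 1)⁻¹ := by positivity
    have : P k i j = N i j + ((k:ℝ) + 1)⁻¹ * 1 := by
      simp [hP, hJ, Matrix.add_apply, Matrix.smul_apply]
    rw [this]
    linarith [hN i j]
  choose ρ hρpos x hxpos hEig using fun k : ℕ => perron_positive (hPpos k)
  -- eigenvalue determinant equation
  have hdetk : ∀ k, ((ρ k) • (1 : Matrix (Fin n) (Fin n) ℝ) - P k).det = 0 := by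
    intro k
    rw [← Matrix.exists_mulVec_eq_zero_iff]
    refine ⟨x k, fun h0 => (hxpos k (Classical.arbitrary (Fin n))).ne'
      (congrFun h0 (Classical.arbitrary (Fin n))), ?_⟩
    rw [Matrix.sub_mulVec, Matrix.smul_mulVec, Matrix.one_mulVec, hEig k, sub_self]
  -- uniform upper bound on ρ k
  set B : ℝ := ∑ i, ∑ j, (N i j + 1) with hB
  have hρB : ∀ k, ρ k ≤ B := by
    intro k
    obtain ⟨i0, -, hi0⟩ := Finset.exists_max_image Finset.univ (x k) Finset.univ_nonempty
    have hxi0 : 0 < x k i0 := hxpos k i0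
    have h1 : ρ k * x k i0 = ∑ j, P k i0 j * x k j := by
      have := congrFun (hEig k) i0
      simp only [Pi.smul_apply, smul_eq_mul] at this
      rw [← this]
      rfl
    have h2 : ∑ j, P k i0 j * x k j ≤ (∑ j, P k i0 j) * x k i0 := by
      rw [Finset.sum_mul]
      exact Finset.sum_le_sum fun j _ =>
        mul_le_mul_of_nonneg_left (hi0 j (Finset.mem_univ j)) (hPpos k i0 j).le
    have h3 : ∑ j, P k i0 j ≤ ∑ j, (N i0 j + 1) := by
      refine Finset.sum_le_sum fun j _ => ?_
      have : P k i0 j = N i0 j + ((k:ℝ) + 1)⁻¹ * 1 := by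
        simp [hP, hJ, Matrix.add_apply, Matrix.smul_apply]
      rw [this]
      have : ((k:ℝ) + 1)⁻¹ ≤ 1 := by
        rw [inv_le_one_iff₀]; right; linarith [Nat.cast_nonneg (α := ℝ) k]
      linarith
    have h4 : ∑ j, (N i0 j + 1) ≤ B := by
      rw [hB]
      exact Finset.single_le_sum (f := fun i => ∑ j, (N i j + 1))
        (fun i _ => Finset.sum_nonneg fun j _ => by linarith [hN i j]) (Finset.mem_univ i0)
    have h5 : ρ k * x k i0 ≤ B * x k i0 := by
      rw [h1]
      calc ∑ j, P k i0 j * x k j ≤ (∑ j, P k i0 j) * x k i0 := h2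
        _ ≤ B * x k i0 := mul_le_mul_of_nonneg_right (le_trans h3 h4) hxi0.le
    exact le_of_mul_le_mul_right h5 hxi0
  -- exists k with ρ k ≤ c
  have hexk : ∃ k, ρ k ≤ c := by
    by_contra hcon
    push_neg at hcon
    have hmem : ∀ k, ρ k ∈ Set.Icc c B := fun k => ⟨(hcon k).le, hρB k⟩
    obtain ⟨lam, hlam, φ, hφ, hconv⟩ := (isCompact_Icc (a := c) (b := B)).tendsto_subseq hmem
    -- continuity of the determinant function
    set F : ℝ × ℝ → ℝ := fun q =>
      (q.1 • (1 : Matrix (Fin n) (Fin n) ℝ) - (N + q.2 • J)).det with hF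
    have hFcont : Continuous F := by
      apply Continuous.matrix_det
      apply continuous_matrix
      intro i j
      simp only [Matrix.sub_apply, Matrix.add_apply, Matrix.smul_apply, smul_eq_mul]
      fun_prop
    have hFk : ∀ k, F (ρ k, ((k:ℝ) + 1)⁻¹) = 0 := fun k => hdetk k
    have htend : Filter.Tendsto (fun k : ℕ => (ρ (φ k), ((φ k : ℝ) + 1)⁻¹))
        Filter.atTop (nhds (lam, 0)) := by
      refine Filter.Tendsto.prodMk_nhds hconv ?_
      have h1 : Filter.Tendsto (fun m : ℕ => ((m:ℝ) + 1)⁻¹) Filter.atTop (nhds 0) := by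
        simpa using tendsto_one_div_add_atTop_nhds_zero_nat (𝕜 := ℝ)
      exact h1.comp hφ.tendsto_atTop
    have hF0 : F (lam, 0) = 0 := by
      have h0 := (hFcont.continuousAt (x := (lam, 0))).tendsto.comp htend
      have h1 : Filter.Tendsto (fun _ : ℕ => (0:ℝ)) Filter.atTop (nhds (F (lam, 0))) := by
        have heq : (F ∘ fun k : ℕ => (ρ (φ k), ((φ k : ℝ) + 1)⁻¹)) = fun _ : ℕ => (0:ℝ) := by
          funext k; exact hFk (φ k)
        rwa [heq] at h0
      exact (tendsto_nhds_unique tendsto_const_nhds h1).symm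
    -- contradiction with Hurwitz
    have hdet0 : ((lam - c) • (1 : Matrix (Fin n) (Fin n) ℝ) - A).det = 0 := by
      have : (lam - c) • (1 : Matrix (Fin n) (Fin n) ℝ) - A
          = lam • (1 : Matrix (Fin n) (Fin n) ℝ) - (N + (0:ℝ) • J) := by
        rw [hNdef, sub_smul, zero_smul, add_zero]
        abel
      rw [this]
      exact hF0
    have hspec := mem_spectrum_of_det_real hdet0
    have := hH _ hspec
    rw [Complex.ofReal_re] at this
    have : c ≤ lam := hlam.1
    linarith [hH _ hspec, Complex.ofReal_re (lam - c) ▸ (hH _ hspec)]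
  obtain ⟨k, hk⟩ := hexk
  refine ⟨x k, hxpos k, fun i => ?_⟩
  have hAeq : A.mulVec (x k) i
      = ρ k * x k i - ((k:ℝ) + 1)⁻¹ * (∑ j, x k j) - c * x k i := by
    have hA' : A = P k - ((k:ℝ) + 1)⁻¹ • J - c • (1 : Matrix (Fin n) (Fin n) ℝ) := by
      rw [hP]
      simp only
      rw [hNdef]
      abel
    rw [hA', Matrix.sub_mulVec, Matrix.sub_mulVec, hEig k,
      Matrix.smul_mulVec, Matrix.smul_mulVec, Matrix.one_mulVec]
    have hJmv : J.mulVec (x k) i = ∑ j, x k j := by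
      rw [Matrix.mulVec, dotProduct]
      simp [hJ]
    simp only [Pi.sub_apply, Pi.smul_apply, smul_eq_mul]
    rw [hJmv]
  have hσ : 0 < ∑ j, x k j := Finset.sum_pos (fun j _ => hxpos k j) Finset.univ_nonempty
  rw [hAeq]
  have h1 : ρ k * x k i ≤ c * x k i := mul_le_mul_of_nonneg_right hk (hxpos k i).le
  have h2 : 0 < ((k:ℝ) + 1)⁻¹ * (∑ j, x k j) := by positivity
  clear_value c N J P B
  linarith [h1, h2]

lemma isUnit_det_of_hurwitz {A : Matrix (Fin n) (Fin n) ℝ} (h : HurwitzStable A) :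
    IsUnit A.det := by
  rw [isUnit_iff_ne_zero]
  intro h0
  have hd : ((0:ℝ) • (1 : Matrix (Fin n) (Fin n) ℝ) - A).det = 0 := by
    rw [zero_smul, zero_sub, Matrix.det_neg, h0, mul_zero]
  simpa using h _ (mem_spectrum_of_det_real hd)

lemma colsum_mul {a b c : ℕ} (C : Matrix (Fin a) (Fin b) ℝ) (X : Matrix (Fin b) (Fin c) ℝ)
    (j : Fin c) : ∑ i, (C * X) i j = ∑ k, (∑ i, C i k) * X k j := by
  simp_rw [Matrix.mul_apply]
  rw [Finset.sum_comm]
  exact Finset.sum_congr rfl fun k _ => by rw [Finset.sum_mul]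

lemma sum_sum_mul {a b c : ℕ} (M : Matrix (Fin a) (Fin b) ℝ) (Q : Matrix (Fin b) (Fin c) ℝ)
    (u : Fin a → ℝ) (j : Fin c) :
    ∑ l, (∑ k, u k * M k l) * Q l j = ∑ k, u k * (M * Q) k j := by
  simp_rw [Finset.sum_mul, Matrix.mul_apply, Finset.mul_sum]
  rw [Finset.sum_comm]
  exact Finset.sum_congr rfl fun k _ => Finset.sum_congr rfl fun l _ => by ring

lemma sum_mul_self_inv {A : Matrix (Fin n) (Fin n) ℝ} (hdet : IsUnit A.det)
    (u : Fin n → ℝ) (l : Fin n) :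
    ∑ k, (∑ i, u i * A i k) * A⁻¹ k l = u l := by
  rw [sum_sum_mul, Matrix.mul_nonsing_inv A hdet]
  simp [Matrix.one_apply]

/-- For a positive LTI system `(A, B, C, D)` (with `A` Metzler and `B, C, D` nonnegative)
and `γ > 0`: `A` is Hurwitz stable with `𝟙ᵀ(D − C A⁻¹ B) − γ 𝟙ᵀ < 0` iff there exists an
entrywise positive `v` with `vᵀA + 𝟙ᵀC < 0` and `vᵀB + 𝟙ᵀD < γ𝟙ᵀ` entrywise. -/
theorem lti_L1_gain_characterization (n s r : ℕ)
    (A : Matrix (Fin n) (Fin n) ℝ) (hA : Metzler A)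
    (B : Matrix (Fin n) (Fin s) ℝ) (hB : ∀ i j, 0 ≤ B i j)
    (C : Matrix (Fin r) (Fin n) ℝ) (hC : ∀ i j, 0 ≤ C i j)
    (D : Matrix (Fin r) (Fin s) ℝ) (hD : ∀ i j, 0 ≤ D i j)
    (γ : ℝ) (hγ : 0 < γ) :
    (HurwitzStable A ∧ ∀ j, (∑ i, (D - C * A⁻¹ * B) i j) - γ < 0) ↔
      ∃ v : Fin n → ℝ, (∀ i, 0 < v i) ∧
        (∀ j, (∑ i, v i * A i j) + (∑ i, C i j) < 0) ∧
        (∀ j, (∑ i, v i * B i j) + (∑ i, D i j) < γ) := by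
  have hq : ∀ k, (0:ℝ) ≤ ∑ i, C i k := fun k => Finset.sum_nonneg fun i _ => hC i k
  constructor
  · rintro ⟨hH, hgain⟩
    have hdet : IsUnit A.det := isUnit_det_of_hurwitz hH
    obtain ⟨w, hwpos, hAw⟩ := exists_pos_vec_of_hurwitz hA hH
    have hinv : ∀ i j, A⁻¹ i j ≤ 0 := inv_nonpos_of_metzler hA hdet hwpos hAw
    have hcol : ∀ l, ∃ k, A⁻¹ k l ≠ 0 := by
      intro l
      by_contra hno
      push_neg at hno
      have h1 : (A * A⁻¹) l l = 1 := by
        rw [Matrix.mul_nonsing_inv A hdet]; simp [Matrix.one_apply]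
      rw [Matrix.mul_apply] at h1
      simp [hno] at h1
    set base : Fin s → ℝ := fun j => ∑ i, (D - C * A⁻¹ * B) i j with hbase
    have hbase_lt : ∀ j, base j < γ := fun j => by linarith [hgain j]
    set g : Fin s → ℝ := fun j => ∑ k, -(A⁻¹ * B) k j with hg
    have hABn : ∀ k j, (A⁻¹ * B) k j ≤ 0 := by
      intro k j
      rw [Matrix.mul_apply]
      exact Finset.sum_nonpos fun l _ => mul_nonpos_of_nonpos_of_nonneg (hinv k l) (hB l j)
    -- choose ε
    have hev : ∀ᶠ ε in nhdsWithin (0:ℝ) (Set.Ioi 0), ∀ j, base j + ε * g j < γ := by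
      rw [Filter.eventually_all]
      intro j
      have hcont : Filter.Tendsto (fun ε : ℝ => base j + ε * g j)
          (nhdsWithin 0 (Set.Ioi 0)) (nhds (base j)) := by
        have h0 : Filter.Tendsto (fun ε : ℝ => base j + ε * g j) (nhds 0)
            (nhds (base j + 0 * g j)) :=
          (continuous_const.add (continuous_id.mul continuous_const)).tendsto 0
        simpa using h0.mono_left nhdsWithin_le_nhds
      exact hcont.eventually_lt_const (hbase_lt j)
    obtain ⟨ε, hεlt, hεpos⟩ := (hev.and self_mem_nhdsWithin).exists
    refine ⟨fun l => ∑ k, ((∑ i, C i k) + ε) * -(A⁻¹ k l), ?_, ?_, ?_⟩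
    · intro l
      obtain ⟨k0, hk0⟩ := hcol l
      refine Finset.sum_pos' (fun k _ => mul_nonneg (by linarith [hq k])
        (by linarith [hinv k l])) ?_
      refine ⟨k0, Finset.mem_univ k0, mul_pos (by linarith [hq k0]) ?_⟩
      rcases lt_or_eq_of_le (hinv k0 l) with h | h
      · linarith
      · exact absurd h hk0
    · intro j
      have hident : ∑ l, (∑ k, ((∑ i, C i k) + ε) * -(A⁻¹ k l)) * A l j
          = -((∑ i, C i j) + ε) := by
        have h1 : ∀ l, (∑ k, ((∑ i, C i k) + ε) * -(A⁻¹ k l))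
            = ∑ k, (-((∑ i, C i k) + ε)) * A⁻¹ k l := fun l =>
          Finset.sum_congr rfl fun k _ => by ring
        calc ∑ l, (∑ k, ((∑ i, C i k) + ε) * -(A⁻¹ k l)) * A l j
            = ∑ k, (-((∑ i, C i k) + ε)) * (A⁻¹ * A) k j := by
              simp_rw [h1]; exact sum_sum_mul A⁻¹ A _ j
          _ = -((∑ i, C i j) + ε) := by
              rw [Matrix.nonsing_inv_mul A hdet]
              simp [Matrix.one_apply]
      rw [hident]
      linarith
    · intro j
      have hident2 : ∑ l, (∑ k, ((∑ i, C i k) + ε) * -(A⁻¹ k l)) * B l j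
          = ∑ k, (-((∑ i, C i k) + ε)) * (A⁻¹ * B) k j := by
        have h1 : ∀ l, (∑ k, ((∑ i, C i k) + ε) * -(A⁻¹ k l))
            = ∑ k, (-((∑ i, C i k) + ε)) * A⁻¹ k l := fun l =>
          Finset.sum_congr rfl fun k _ => by ring
        simp_rw [h1]; exact sum_sum_mul A⁻¹ B _ j
      have hbase_eq : base j = (∑ i, D i j) - ∑ k, (∑ i, C i k) * (A⁻¹ * B) k j := by
        rw [hbase]
        simp only [Matrix.sub_apply]
        rw [Finset.sum_sub_distrib]
        congr 1
        rw [Matrix.mul_assoc]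
        exact colsum_mul C (A⁻¹ * B) j
      have hsum : ∑ k, (-((∑ i, C i k) + ε)) * (A⁻¹ * B) k j
          = (base j - ∑ i, D i j) + ε * g j := by
        have h2 : ∀ k, (-((∑ i, C i k) + ε)) * (A⁻¹ * B) k j
            = -((∑ i, C i k) * (A⁻¹ * B) k j) + ε * -(A⁻¹ * B) k j := fun k => by ring
        rw [Finset.sum_congr rfl fun k _ => h2 k, Finset.sum_add_distrib, hbase_eq, hg]
        simp only
        rw [Finset.sum_neg_distrib, ← Finset.mul_sum]
        ring
      rw [hident2, hsum]
      linarith [hεlt j]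
  · rintro ⟨v, hv, h1, h2⟩
    have hvA : ∀ j, ∑ i, v i * A i j < 0 := fun j => by linarith [h1 j, hq j]
    have hH : HurwitzStable A := hurwitz_of_pos_vec hA hv hvA
    have hdet : IsUnit A.det := isUnit_det_of_hurwitz hH
    have hdetT : IsUnit Aᵀ.det := by rwa [Matrix.det_transpose]
    have hAT : Metzler Aᵀ := fun i j hij => hA j i (Ne.symm hij)
    have hATv : ∀ i, Aᵀ.mulVec v i < 0 := by
      intro i
      have heq : Aᵀ.mulVec v i = ∑ j, v j * A j i := by
        rw [Matrix.mulVec, dotProduct]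
        exact Finset.sum_congr rfl fun j _ => by rw [Matrix.transpose_apply]; ring
      rw [heq]; exact hvA i
    have hinvT := inv_nonpos_of_metzler hAT hdetT hv hATv
    have hinv : ∀ i j, A⁻¹ i j ≤ 0 := by
      intro i j
      have heq : A⁻¹ i j = (Aᵀ)⁻¹ j i := by
        rw [← Matrix.transpose_nonsing_inv]
        rfl
      rw [heq]; exact hinvT j i
    refine ⟨hH, fun j => ?_⟩
    have hpv : ∀ l, ∑ k, (∑ i, C i k) * (-(A⁻¹ k l)) ≤ v l := by
      intro l
      have hkey : ∑ k, (∑ i, v i * A i k) * A⁻¹ k l = v l := sum_mul_self_inv hdet v l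
      have hterm : ∀ k, ((∑ i, C i k) + (∑ i, v i * A i k)) * (-(A⁻¹ k l)) ≤ 0 := by
        intro k
        apply mul_nonpos_of_nonpos_of_nonneg
        · linarith [h1 k]
        · linarith [hinv k l]
      have hsum0 : ∑ k, ((∑ i, C i k) + (∑ i, v i * A i k)) * (-(A⁻¹ k l)) ≤ 0 :=
        Finset.sum_nonpos fun k _ => hterm k
      have hexpand : ∑ k, ((∑ i, C i k) + (∑ i, v i * A i k)) * (-(A⁻¹ k l))
          = (∑ k, (∑ i, C i k) * (-(A⁻¹ k l))) - v l := by
        have h3 : ∀ k, ((∑ i, C i k) + (∑ i, v i * A i k)) * (-(A⁻¹ k l))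
            = (∑ i, C i k) * (-(A⁻¹ k l)) - (∑ i, v i * A i k) * A⁻¹ k l := fun k => by ring
        rw [Finset.sum_congr rfl fun k _ => h3 k, Finset.sum_sub_distrib, hkey]
      linarith [hexpand ▸ hsum0]
    have hbase_eq : ∑ i, (D - C * A⁻¹ * B) i j
        = (∑ i, D i j) + ∑ l, (∑ k, (∑ i, C i k) * (-(A⁻¹ k l))) * B l j := by
      simp only [Matrix.sub_apply]
      rw [Finset.sum_sub_distrib]
      have hCAB : ∑ i, (C * A⁻¹ * B) i j = ∑ l, (∑ k, (∑ i, C i k) * A⁻¹ k l) * B l j := by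
        rw [colsum_mul (C * A⁻¹) B j]
        exact Finset.sum_congr rfl fun l _ => by rw [colsum_mul C A⁻¹ l]
      rw [hCAB]
      rw [sub_eq_add_neg, ← Finset.sum_neg_distrib]
      congr 1
      refine Finset.sum_congr rfl fun l _ => ?_
      rw [← neg_mul, ← Finset.sum_neg_distrib]
      congr 1
      exact Finset.sum_congr rfl fun k _ => by ring
    have hmono : ∑ l, (∑ k, (∑ i, C i k) * (-(A⁻¹ k l))) * B l j ≤ ∑ l, v l * B l j :=
      Finset.sum_le_sum fun l _ => mul_le_mul_of_nonneg_right (hpv l) (hB l j)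
    have := h2 j
    rw [hbase_eq]
    linarith
end
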